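/- Let I : (0,1) → (0,1) be quasiconcave satisfying condition (★), and let ‖·‖_Y be an r.i. norm such that ‖H_I 1‖_Y < ∞ and T_I is bounded on Y' (there is C₀ > 0 with ‖T_I g‖_{Y'} ≤ C₀·‖g‖_{Y'} for all g ∈ M_+(0,1)). Then there exists C > 0 such that for every f ∈ M_+(0,1): ‖ t ↦ ∫_t^1 f(s)/I(s) ds ‖_Y ≤ C·‖ t ↦ ∫_t^1 f^*(s)/I(s) ds ‖_Y. Consequently, sup{ ‖H_I h‖_Y : h ∈ M_+(0,1), h^* = f^* } ≈ ‖H_I f^*‖_Y, with constants independent of f. -/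

import Mathlib

open MeasureTheory Set Filter
open scoped ENNReal

noncomputable section

/-- The nonincreasing rearrangement of `f` over `(0,1)`. -/
def rearr (f : ℝ → ℝ≥0∞) (t : ℝ) : ℝ≥0∞ :=
  sInf {l : ℝ≥0∞ | volume {s ∈ Set.Ioo (0:ℝ) 1 | l < f s} ≤ ENNReal.ofReal t}

/-- The maximal nonincreasing rearrangement `f^{**}(t) = (1/t) ∫_0^t f^*(s) ds`. -/
def dstar (f : ℝ → ℝ≥0∞) (t : ℝ) : ℝ≥0∞ :=
  (ENNReal.ofReal t)⁻¹ * ∫⁻ s in Set.Ioo (0:ℝ) t, rearr f s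

/-- The `L¹(0,1)` norm. -/
def lOne (f : ℝ → ℝ≥0∞) : ℝ≥0∞ := ∫⁻ t in Set.Ioo (0:ℝ) 1, f t

/-- The norm of the Marcinkiewicz-type space `m_I`. -/
def mNorm (I : ℝ → ℝ) (f : ℝ → ℝ≥0∞) : ℝ≥0∞ :=
  ⨆ t ∈ Set.Ioo (0:ℝ) 1, ENNReal.ofReal (I t) * rearr f t

/-- The norm of `m_Ĩ` where `Ĩ(t) = t / I(t)`. -/
def mNormTilde (I : ℝ → ℝ) (f : ℝ → ℝ≥0∞) : ℝ≥0∞ :=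
  ⨆ t ∈ Set.Ioo (0:ℝ) 1, ENNReal.ofReal (t / I t) * rearr f t

/-- The supremum operator `S_I f(t) = (1/I(t)) sup_{0<s≤t} I(s) f^*(s)`. -/
def SI (I : ℝ → ℝ) (f : ℝ → ℝ≥0∞) : ℝ → ℝ≥0∞ := fun t =>
  (ENNReal.ofReal (I t))⁻¹ * ⨆ s ∈ Set.Ioc (0:ℝ) t, ENNReal.ofReal (I s) * rearr f s

/-- The supremum operator `T_I f(t) = (I(t)/t) sup_{t≤s<1} (s/I(s)) f^*(s)`. -/
def TI (I : ℝ → ℝ) (f : ℝ → ℝ≥0∞) : ℝ → ℝ≥0∞ := fun t =>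
  ENNReal.ofReal (I t / t) * ⨆ s ∈ Set.Ico t 1, ENNReal.ofReal (s / I s) * rearr f s

/-- `H_I f(t) = ∫_t^1 f(s)/I(s) ds`. -/
def HI (I : ℝ → ℝ) (f : ℝ → ℝ≥0∞) : ℝ → ℝ≥0∞ := fun t =>
  ∫⁻ s in Set.Ioo t 1, f s / ENNReal.ofReal (I s)

/-- `R_I f(t) = (1/I(t)) ∫_0^t f(s) ds`. -/
def RI (I : ℝ → ℝ) (f : ℝ → ℝ≥0∞) : ℝ → ℝ≥0∞ := fun t =>
  (ENNReal.ofReal (I t))⁻¹ * ∫⁻ s in Set.Ioo (0:ℝ) t, f s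

/-- `I : (0,1) → (0,1)` is quasiconcave: a nondecreasing bijection of `(0,1)` onto `(0,1)`
with `I(t)/t` nonincreasing, `I(0+) = 0` and `I(1-) = 1`. -/
def Quasiconcave (I : ℝ → ℝ) : Prop :=
  Set.BijOn I (Set.Ioo 0 1) (Set.Ioo 0 1) ∧
  MonotoneOn I (Set.Ioo 0 1) ∧
  AntitoneOn (fun t => I t / t) (Set.Ioo 0 1) ∧
  Tendsto I (nhdsWithin 0 (Set.Ioo 0 1)) (nhds 0) ∧
  Tendsto I (nhdsWithin 1 (Set.Ioo 0 1)) (nhds 1)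

/-- Condition (★): `∫_0^t I(s)/s ds ≲ I(t)`. -/
def StarCond (I : ℝ → ℝ) : Prop :=
  ∃ C : ℝ, 0 < C ∧ ∀ t ∈ Set.Ioo (0:ℝ) 1,
    ∫⁻ s in Set.Ioo (0:ℝ) t, ENNReal.ofReal (I s / s) ≤ ENNReal.ofReal (C * I t)

/-- The average property: `∫_0^t ds/I(s) ≲ t/I(t)`. -/
def AvgProp (I : ℝ → ℝ) : Prop :=
  ∃ C : ℝ, 0 < C ∧ ∀ t ∈ Set.Ioo (0:ℝ) 1,
    ∫⁻ s in Set.Ioo (0:ℝ) t, ENNReal.ofReal (1 / I s) ≤ ENNReal.ofReal (C * (t / I t))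

/-- The condition `∫_t^1 I(s)/s² ds ≲ (1/t) ∫_0^t I(s)/s ds`. -/
def MaxCond (I : ℝ → ℝ) : Prop :=
  ∃ C : ℝ, 0 < C ∧ ∀ t ∈ Set.Ioo (0:ℝ) 1,
    ∫⁻ s in Set.Ioo t 1, ENNReal.ofReal (I s / s ^ 2) ≤
      ENNReal.ofReal (C / t) * ∫⁻ s in Set.Ioo (0:ℝ) t, ENNReal.ofReal (I s / s)

/-- The class `𝒬` of quasiconcave functions. -/
def ClassQ (I : ℝ → ℝ) : Prop :=
  Quasiconcave I ∧ StarCond I ∧ AvgProp I ∧ MaxCond I ∧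
  ∃ c d : ℝ,
    IsLUB {l : ℝ | 0 ≤ l ∧ ∀ t ∈ Set.Ioo (0:ℝ) 1,
      ENNReal.ofReal (l * (I t / t ^ 2 - 1)) ≤
        ∫⁻ s in Set.Ioo t 1, ENNReal.ofReal (I s / s ^ 3)} c ∧
    IsLeast {e : ℝ | 0 < e ∧ ∀ t ∈ Set.Ioo (0:ℝ) 1,
      ∫⁻ s in Set.Ioo t 1, ENNReal.ofReal (I s / s ^ 2) ≤
        ENNReal.ofReal (e * (I t / t))} d ∧
    (1 - c) * d ≤ c

/-- The `Δ₂` condition: `I(2t) ≤ C I(t)` for `t ∈ (0,1/2)`. -/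
def Delta2 (I : ℝ → ℝ) : Prop :=
  ∃ C : ℝ, 0 < C ∧ ∀ t ∈ Set.Ioo (0:ℝ) (1/2), I (2 * t) ≤ C * I t

/-- A rearrangement-invariant Banach function norm on `M₊(0,1)`. -/
def IsRiNorm (ρ : (ℝ → ℝ≥0∞) → ℝ≥0∞) : Prop :=
  (∀ f : ℝ → ℝ≥0∞, Measurable f →
      (ρ f = 0 ↔ f =ᵐ[volume.restrict (Set.Ioo (0:ℝ) 1)] 0)) ∧
  (∀ f : ℝ → ℝ≥0∞, Measurable f → ∀ a : ℝ, 0 ≤ a →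
      ρ (fun t => ENNReal.ofReal a * f t) = ENNReal.ofReal a * ρ f) ∧
  (∀ f g : ℝ → ℝ≥0∞, Measurable f → Measurable g →
      ρ (fun t => f t + g t) ≤ ρ f + ρ g) ∧
  (∀ f g : ℝ → ℝ≥0∞, Measurable f → Measurable g →
      (∀ᵐ t ∂(volume.restrict (Set.Ioo (0:ℝ) 1)), f t ≤ g t) → ρ f ≤ ρ g) ∧
  (∀ (fn : ℕ → ℝ → ℝ≥0∞) (f : ℝ → ℝ≥0∞), (∀ n, Measurable (fn n)) → Measurable f →
      (∀ᵐ t ∂(volume.restrict (Set.Ioo (0:ℝ) 1)), Monotone (fun n => fn n t)) →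
      (∀ᵐ t ∂(volume.restrict (Set.Ioo (0:ℝ) 1)), (⨆ n, fn n t) = f t) →
      (⨆ n, ρ (fn n)) = ρ f) ∧
  (ρ (fun _ => 1) < ⊤) ∧
  (∃ c : ℝ, 0 < c ∧ ∀ f : ℝ → ℝ≥0∞, Measurable f →
      ∫⁻ t in Set.Ioo (0:ℝ) 1, f t ≤ ENNReal.ofReal c * ρ f) ∧
  (∀ f : ℝ → ℝ≥0∞, Measurable f → ρ f = ρ (rearr f))

/-- The associate norm `ρ'`. -/
def assoc (ρ : (ℝ → ℝ≥0∞) → ℝ≥0∞) (f : ℝ → ℝ≥0∞) : ℝ≥0∞ :=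
  ⨆ (g : ℝ → ℝ≥0∞) (_ : Measurable g ∧ ρ g ≤ 1),
    ∫⁻ t in Set.Ioo (0:ℝ) 1, f t * g t

/-- The optimal target norm `‖f‖_{Y_X}` of the r.i. norm `ρ = ‖·‖_X` under `H_I`. -/
def optTargetNorm (I : ℝ → ℝ) (ρ : (ℝ → ℝ≥0∞) → ℝ≥0∞) (f : ℝ → ℝ≥0∞) : ℝ≥0∞ :=
  ⨆ (g : ℝ → ℝ≥0∞) (_ : Measurable g ∧ assoc ρ (RI I (rearr g)) ≤ 1),
    ∫⁻ t in Set.Ioo (0:ℝ) 1, rearr f t * rearr g t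

/-- The optimal domain norm `‖f‖_{X_Y} = sup_{h ∼ f} ‖H_I h‖_Y`. -/
def optDomainNorm (I : ℝ → ℝ) (ρY : (ℝ → ℝ≥0∞) → ℝ≥0∞) (f : ℝ → ℝ≥0∞) : ℝ≥0∞ :=
  ⨆ (h : ℝ → ℝ≥0∞)
    (_ : Measurable h ∧ ∀ t ∈ Set.Ioo (0:ℝ) 1, rearr h t = rearr f t),
      ρY (HI I h)

/-- `H_I : X → Y` boundedly. -/
def HIBounded (I : ℝ → ℝ) (ρX ρY : (ℝ → ℝ≥0∞) → ℝ≥0∞) : Prop :=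
  ∃ C : ℝ, 0 < C ∧ ∀ f : ℝ → ℝ≥0∞, Measurable f →
    ρY (HI I f) ≤ ENNReal.ofReal C * ρX f

/-- `X` is the optimal domain space for `Y` under `H_I`. -/
def IsOptimalDomain (I : ℝ → ℝ) (ρX ρY : (ℝ → ℝ≥0∞) → ℝ≥0∞) : Prop :=
  HIBounded I ρX ρY ∧
  ∀ ρZ : (ℝ → ℝ≥0∞) → ℝ≥0∞, IsRiNorm ρZ → HIBounded I ρZ ρY →
    ∃ C : ℝ, 0 < C ∧ ∀ f : ℝ → ℝ≥0∞, Measurable f →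
      ρX f ≤ ENNReal.ofReal C * ρZ f

/-- `Y` is the optimal target space for `X` under `H_I`. -/
def IsOptimalTarget (I : ℝ → ℝ) (ρX ρY : (ℝ → ℝ≥0∞) → ℝ≥0∞) : Prop :=
  HIBounded I ρX ρY ∧
  ∀ ρZ : (ℝ → ℝ≥0∞) → ℝ≥0∞, IsRiNorm ρZ → HIBounded I ρX ρZ →
    ∃ C : ℝ, 0 < C ∧ ∀ f : ℝ → ℝ≥0∞, Measurable f →
      ρZ f ≤ ENNReal.ofReal C * ρY f

section Aux

open ENNReal

namespace S17

/-- The distribution function of `f` over `(0,1)`. -/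
def distrib (f : ℝ → ℝ≥0∞) (a : ℝ≥0∞) : ℝ≥0∞ :=
  volume {s ∈ Set.Ioo (0:ℝ) 1 | a < f s}

lemma rearr_def (f : ℝ → ℝ≥0∞) (t : ℝ) :
    rearr f t = sInf {l : ℝ≥0∞ | distrib f l ≤ ENNReal.ofReal t} := rfl

lemma rearr_le {f : ℝ → ℝ≥0∞} {l : ℝ≥0∞} {t : ℝ}
    (h : distrib f l ≤ ENNReal.ofReal t) : rearr f t ≤ l :=
  sInf_le h

lemma iSup_min_one (D : ℕ → ℝ≥0∞) : (⨆ n, min (D n) 1) = min (⨆ n, D n) 1 := by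
  apply le_antisymm
  · exact iSup_le fun n => min_le_min (le_iSup D n) le_rfl
  · rcases le_or_gt (⨆ n, D n) 1 with h | h
    · calc min (⨆ n, D n) 1 ≤ ⨆ n, D n := min_le_left _ _
      _ ≤ ⨆ n, min (D n) 1 := iSup_mono fun n => le_min le_rfl (le_trans (le_iSup D n) h)
    · obtain ⟨n, hn⟩ := lt_iSup_iff.mp h
      calc min (⨆ n, D n) 1 ≤ 1 := min_le_right _ _
      _ = min (D n) 1 := (min_eq_right hn.le).symm
      _ ≤ ⨆ n, min (D n) 1 := le_iSup (fun n => min (D n) 1) n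

lemma distrib_antitone (f : ℝ → ℝ≥0∞) : Antitone (distrib f) := by
  intro a b hab
  apply measure_mono
  intro s hs
  exact ⟨hs.1, lt_of_le_of_lt hab hs.2⟩

lemma distrib_le_one (f : ℝ → ℝ≥0∞) (a : ℝ≥0∞) : distrib f a ≤ 1 := by
  calc distrib f a ≤ volume (Set.Ioo (0:ℝ) 1) := measure_mono (fun s hs => hs.1)
  _ = 1 := by simp [Real.volume_Ioo]

lemma distrib_top (f : ℝ → ℝ≥0∞) : distrib f ⊤ = 0 := by
  have : {s ∈ Set.Ioo (0:ℝ) 1 | ⊤ < f s} = ∅ := by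
    ext s; simp [not_top_lt]
  simp [distrib, this]

lemma distrib_mono_fn {f g : ℝ → ℝ≥0∞} (h : ∀ s ∈ Set.Ioo (0:ℝ) 1, f s ≤ g s)
    (a : ℝ≥0∞) : distrib f a ≤ distrib g a := by
  apply measure_mono
  intro s hs
  exact ⟨hs.1, lt_of_lt_of_le hs.2 (h s hs.1)⟩

lemma exists_nat_add_inv_lt {a b : ℝ≥0∞} (h : a < b) :
    ∃ n : ℕ, a + (↑(n+1) : ℝ≥0∞)⁻¹ < b := by
  have ha : a ≠ ⊤ := h.ne_top
  rcases eq_or_ne b ⊤ with hb | hb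
  · refine ⟨0, ?_⟩
    rw [hb]
    exact ENNReal.add_lt_top.mpr ⟨ha.lt_top, by simp⟩
  · have hba : b - a ≠ 0 := by
      simp only [ne_eq, tsub_eq_zero_iff_le, not_le]; exact h
    obtain ⟨n, hn⟩ := ENNReal.exists_inv_nat_lt hba
    refine ⟨n, ?_⟩
    have h1 : ((↑(n+1) : ℝ≥0∞))⁻¹ ≤ (↑n : ℝ≥0∞)⁻¹ := by
      apply ENNReal.inv_le_inv.mpr
      exact_mod_cast Nat.le_succ n
    calc a + (↑(n+1) : ℝ≥0∞)⁻¹ ≤ a + (↑n : ℝ≥0∞)⁻¹ := add_le_add_right h1 a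
    _ < a + (b - a) := ENNReal.add_lt_add_left ha hn
    _ = b := add_tsub_cancel_of_le h.le

lemma distrib_sup (f : ℝ → ℝ≥0∞) (a : ℝ≥0∞) (ha : a ≠ ⊤) :
    distrib f a = ⨆ n : ℕ, distrib f (a + (↑(n+1) : ℝ≥0∞)⁻¹) := by
  have hset : {s ∈ Set.Ioo (0:ℝ) 1 | a < f s}
      = ⋃ n : ℕ, {s ∈ Set.Ioo (0:ℝ) 1 | a + (↑(n+1) : ℝ≥0∞)⁻¹ < f s} := by
    ext s
    simp only [Set.mem_setOf_eq, Set.mem_iUnion]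
    constructor
    · rintro ⟨hs, hlt⟩
      obtain ⟨n, hn⟩ := exists_nat_add_inv_lt hlt
      exact ⟨n, hs, hn⟩
    · rintro ⟨n, hs, hn⟩
      exact ⟨hs, lt_of_le_of_lt le_self_add hn⟩
  have hmono : Monotone (fun n : ℕ => {s ∈ Set.Ioo (0:ℝ) 1 | a + (↑(n+1) : ℝ≥0∞)⁻¹ < f s}) := by
    intro n m hnm s hs
    refine ⟨hs.1, lt_of_le_of_lt ?_ hs.2⟩
    apply add_le_add_right
    apply ENNReal.inv_le_inv.mpr
    exact_mod_cast Nat.succ_le_succ hnm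
  rw [distrib, hset, hmono.directed_le.measure_iUnion]
  rfl

lemma lt_rearr_iff {f : ℝ → ℝ≥0∞} {a : ℝ≥0∞} {t : ℝ} :
    a < rearr f t ↔ ∃ n : ℕ, ENNReal.ofReal t < distrib f (a + (↑(n+1) : ℝ≥0∞)⁻¹) := by
  constructor
  · intro h
    obtain ⟨n, hn⟩ := exists_nat_add_inv_lt h
    refine ⟨n, ?_⟩
    by_contra hc
    push_neg at hc
    exact absurd (rearr_le hc) (not_le.mpr hn)
  · rintro ⟨n, hn⟩
    have ha : a ≠ ⊤ := by
      rintro rfl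
      rw [top_add, distrib_top] at hn
      simp at hn
    have hmem : ∀ l ∈ {l : ℝ≥0∞ | distrib f l ≤ ENNReal.ofReal t},
        a + (↑(n+1) : ℝ≥0∞)⁻¹ ≤ l := by
      intro l hl
      by_contra hc
      push_neg at hc
      exact absurd (le_trans (distrib_antitone f hc.le) hl) (not_le.mpr hn)
    have : a + (↑(n+1) : ℝ≥0∞)⁻¹ ≤ rearr f t := le_sInf hmem
    refine lt_of_lt_of_le ?_ this
    apply ENNReal.lt_add_right ha
    simp

lemma rearr_antitone (f : ℝ → ℝ≥0∞) : Antitone (rearr f) := by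
  intro t₁ t₂ h
  apply sInf_le_sInf
  intro l hl
  exact le_trans hl (ENNReal.ofReal_le_ofReal h)

lemma rearr_measurable (f : ℝ → ℝ≥0∞) : Measurable (rearr f) :=
  (rearr_antitone f).measurable

lemma rearr_mono {f g : ℝ → ℝ≥0∞} (h : ∀ s ∈ Set.Ioo (0:ℝ) 1, f s ≤ g s) (t : ℝ) :
    rearr f t ≤ rearr g t := by
  apply sInf_le_sInf
  intro l hl
  exact le_trans (distrib_mono_fn h l) hl

lemma volume_ofReal_lt (D : ℝ≥0∞) :
    volume {t ∈ Set.Ioo (0:ℝ) 1 | ENNReal.ofReal t < D} = min D 1 := by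
  rcases eq_or_ne D ⊤ with hD | hD
  · subst hD
    have : {t ∈ Set.Ioo (0:ℝ) 1 | ENNReal.ofReal t < ⊤} = Set.Ioo (0:ℝ) 1 := by
      ext t; simp [ENNReal.ofReal_lt_top]
    rw [this, Real.volume_Ioo]
    simp
  · have hset : {t ∈ Set.Ioo (0:ℝ) 1 | ENNReal.ofReal t < D} = Set.Ioo 0 (min 1 D.toReal) := by
      ext t
      simp only [Set.mem_setOf_eq, Set.mem_Ioo, lt_min_iff]
      constructor
      · rintro ⟨⟨h0, h1⟩, hlt⟩
        exact ⟨h0, h1, (ENNReal.ofReal_lt_iff_lt_toReal h0.le hD).mp hlt⟩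
      · rintro ⟨h0, h1, h2⟩
        exact ⟨⟨h0, h1⟩, (ENNReal.ofReal_lt_iff_lt_toReal h0.le hD).mpr h2⟩
    rw [hset, Real.volume_Ioo, sub_zero]
    rcases le_total D 1 with h | h
    · have htr : D.toReal ≤ 1 := by
        calc D.toReal ≤ (1:ℝ≥0∞).toReal := ENNReal.toReal_mono one_ne_top h
        _ = 1 := by simp
      rw [min_eq_right htr, ENNReal.ofReal_toReal hD, min_eq_left h]
    · have htr : (1:ℝ) ≤ D.toReal := by
        calc (1:ℝ) = (1:ℝ≥0∞).toReal := by simp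
        _ ≤ D.toReal := ENNReal.toReal_mono hD h
      rw [min_eq_left htr, min_eq_right h]
      simp

lemma distrib_rearr (f : ℝ → ℝ≥0∞) (a : ℝ≥0∞) :
    distrib (rearr f) a = min (distrib f a) 1 := by
  rcases eq_or_ne a ⊤ with ha | ha
  · subst ha
    rw [distrib_top, distrib_top]
    simp
  · have hset : {t ∈ Set.Ioo (0:ℝ) 1 | a < rearr f t}
        = ⋃ n : ℕ, {t ∈ Set.Ioo (0:ℝ) 1 |
            ENNReal.ofReal t < distrib f (a + (↑(n+1) : ℝ≥0∞)⁻¹)} := by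
      ext t
      simp only [Set.mem_setOf_eq, Set.mem_iUnion]
      constructor
      · rintro ⟨hs, hlt⟩
        obtain ⟨n, hn⟩ := lt_rearr_iff.mp hlt
        exact ⟨n, hs, hn⟩
      · rintro ⟨n, hs, hn⟩
        exact ⟨hs, lt_rearr_iff.mpr ⟨n, hn⟩⟩
    have hmono : Monotone (fun n : ℕ => {t ∈ Set.Ioo (0:ℝ) 1 |
        ENNReal.ofReal t < distrib f (a + (↑(n+1) : ℝ≥0∞)⁻¹)}) := by
      intro n m hnm t ht
      refine ⟨ht.1, lt_of_lt_of_le ht.2 ?_⟩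
      apply distrib_antitone
      apply add_le_add_right
      apply ENNReal.inv_le_inv.mpr
      exact_mod_cast Nat.succ_le_succ hnm
    rw [distrib, hset, hmono.directed_le.measure_iUnion]
    have hvol : ∀ n : ℕ, volume {t ∈ Set.Ioo (0:ℝ) 1 |
        ENNReal.ofReal t < distrib f (a + (↑(n+1) : ℝ≥0∞)⁻¹)}
        = min (distrib f (a + (↑(n+1) : ℝ≥0∞)⁻¹)) 1 := fun n => volume_ofReal_lt _
    simp_rw [hvol]
    rw [iSup_min_one, ← distrib_sup f a ha]

lemma rearr_idem (f : ℝ → ℝ≥0∞) {t : ℝ} (ht : t ∈ Set.Ioo (0:ℝ) 1) :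
    rearr (rearr f) t = rearr f t := by
  have h1 : ENNReal.ofReal t < 1 := by
    rw [← ENNReal.ofReal_one]
    exact (ENNReal.ofReal_lt_ofReal_iff one_pos).mpr ht.2
  have hset : {l : ℝ≥0∞ | distrib (rearr f) l ≤ ENNReal.ofReal t}
      = {l : ℝ≥0∞ | distrib f l ≤ ENNReal.ofReal t} := by
    ext l
    rw [Set.mem_setOf_eq, Set.mem_setOf_eq, distrib_rearr]
    constructor
    · intro h
      rcases min_le_iff.mp h with h' | h'
      · exact h'
      · exact absurd h' (not_le.mpr h1)
    · intro h
      exact le_trans (min_le_left _ _) h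
  rw [rearr_def, rearr_def, hset]

/-! ### Layer cake and Hardy–Littlewood -/

lemma layer_rep (a : ℝ≥0∞) :
    ∫⁻ x in Set.Ioi (0:ℝ), (if ENNReal.ofReal x < a then 1 else 0) = a := by
  have hms : MeasurableSet {x : ℝ | ENNReal.ofReal x < a} :=
    measurableSet_lt ENNReal.measurable_ofReal measurable_const
  have h1 : (fun x : ℝ => if ENNReal.ofReal x < a then (1:ℝ≥0∞) else 0)
      = Set.indicator {x : ℝ | ENNReal.ofReal x < a} (fun _ => 1) := by
    ext x; simp [Set.indicator_apply]
  rw [h1, lintegral_indicator hms, setLIntegral_one, Measure.restrict_apply hms]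
  rcases eq_or_ne a ⊤ with ha | ha
  · subst ha
    have : {x : ℝ | ENNReal.ofReal x < ⊤} ∩ Set.Ioi 0 = Set.Ioi (0:ℝ) := by
      ext x; simp [ENNReal.ofReal_lt_top]
    rw [this, Real.volume_Ioi]
  · have : {x : ℝ | ENNReal.ofReal x < a} ∩ Set.Ioi 0 = Set.Ioo 0 a.toReal := by
      ext x
      simp only [Set.mem_inter_iff, Set.mem_setOf_eq, Set.mem_Ioi, Set.mem_Ioo]
      constructor
      · rintro ⟨h1, h2⟩
        exact ⟨h2, (ENNReal.ofReal_lt_iff_lt_toReal h2.le ha).mp h1⟩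
      · rintro ⟨h1, h2⟩
        exact ⟨(ENNReal.ofReal_lt_iff_lt_toReal h1.le ha).mpr h2, h1⟩
    rw [this, Real.volume_Ioo, sub_zero, ENNReal.ofReal_toReal ha]

lemma lint_ite_one (P : ℝ → Prop) [DecidablePred P] (hP : MeasurableSet {s | P s}) :
    ∫⁻ s in Set.Ioo (0:ℝ) 1, (if P s then (1:ℝ≥0∞) else 0)
      = volume {s ∈ Set.Ioo (0:ℝ) 1 | P s} := by
  have h1 : (fun s : ℝ => if P s then (1:ℝ≥0∞) else 0)
      = Set.indicator {s : ℝ | P s} (fun _ => 1) := by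
    ext s; simp [Set.indicator_apply]
  rw [h1, lintegral_indicator hP, setLIntegral_one, Measure.restrict_apply hP]
  congr 1
  ext s
  exact and_comm

lemma mul_layer (a b : ℝ≥0∞) :
    a * b = ∫⁻ x in Set.Ioi (0:ℝ), (if ENNReal.ofReal x < a then b else 0) := by
  calc a * b
      = (∫⁻ x in Set.Ioi (0:ℝ), (if ENNReal.ofReal x < a then 1 else 0)) * b := by
        rw [layer_rep]
    _ = ∫⁻ x in Set.Ioi (0:ℝ), (if ENNReal.ofReal x < a then 1 else 0) * b :=
        (lintegral_mul_const _ (Measurable.ite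
          (measurableSet_lt ENNReal.measurable_ofReal measurable_const)
          measurable_const measurable_const)).symm
    _ = ∫⁻ x in Set.Ioi (0:ℝ), (if ENNReal.ofReal x < a then b else 0) := by
        apply lintegral_congr
        intro x
        by_cases h : ENNReal.ofReal x < a <;> simp [h]

lemma ite_layer (P : Prop) [Decidable P] (b : ℝ≥0∞) :
    (if P then b else 0)
      = ∫⁻ y in Set.Ioi (0:ℝ), (if P ∧ ENNReal.ofReal y < b then (1:ℝ≥0∞) else 0) := by
  by_cases h : P
  · simp only [h, if_true, true_and]
    exact (layer_rep b).symm
  · simp [h]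

lemma double_rep (F G : ℝ → ℝ≥0∞) (hF : Measurable F) (hG : Measurable G) :
    ∫⁻ s in Set.Ioo (0:ℝ) 1, F s * G s
      = ∫⁻ x in Set.Ioi (0:ℝ), ∫⁻ y in Set.Ioi (0:ℝ),
          volume {s ∈ Set.Ioo (0:ℝ) 1 | ENNReal.ofReal x < F s ∧ ENNReal.ofReal y < G s} := by
  have m1 : Measurable (Function.uncurry fun s x : ℝ =>
      if ENNReal.ofReal x < F s then G s else 0) := by
    apply Measurable.ite _ (hG.comp measurable_fst) measurable_const
    exact measurableSet_lt (ENNReal.measurable_ofReal.comp measurable_snd)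
      (hF.comp measurable_fst)
  have m2 : ∀ x : ℝ, Measurable (Function.uncurry fun s y : ℝ =>
      if ENNReal.ofReal x < F s ∧ ENNReal.ofReal y < G s then (1:ℝ≥0∞) else 0) := by
    intro x
    apply Measurable.ite _ measurable_const measurable_const
    have hs1 : MeasurableSet {p : ℝ × ℝ | ENNReal.ofReal x < F p.1} :=
      (hF.comp measurable_fst) measurableSet_Ioi
    have hs2 : MeasurableSet {p : ℝ × ℝ | ENNReal.ofReal p.2 < G p.1} :=
      measurableSet_lt (ENNReal.measurable_ofReal.comp measurable_snd)
        (hG.comp measurable_fst)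
    exact hs1.inter hs2
  calc ∫⁻ s in Set.Ioo (0:ℝ) 1, F s * G s
      = ∫⁻ s in Set.Ioo (0:ℝ) 1, ∫⁻ x in Set.Ioi (0:ℝ),
          (if ENNReal.ofReal x < F s then G s else 0) := by
        apply lintegral_congr
        intro s
        exact mul_layer (F s) (G s)
    _ = ∫⁻ x in Set.Ioi (0:ℝ), ∫⁻ s in Set.Ioo (0:ℝ) 1,
          (if ENNReal.ofReal x < F s then G s else 0) :=
        MeasureTheory.lintegral_lintegral_swap m1.aemeasurable
    _ = ∫⁻ x in Set.Ioi (0:ℝ), ∫⁻ s in Set.Ioo (0:ℝ) 1, ∫⁻ y in Set.Ioi (0:ℝ),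
          (if ENNReal.ofReal x < F s ∧ ENNReal.ofReal y < G s then (1:ℝ≥0∞) else 0) := by
        apply lintegral_congr
        intro x
        apply lintegral_congr
        intro s
        exact ite_layer _ (G s)
    _ = ∫⁻ x in Set.Ioi (0:ℝ), ∫⁻ y in Set.Ioi (0:ℝ), ∫⁻ s in Set.Ioo (0:ℝ) 1,
          (if ENNReal.ofReal x < F s ∧ ENNReal.ofReal y < G s then (1:ℝ≥0∞) else 0) := by
        apply lintegral_congr
        intro x
        exact MeasureTheory.lintegral_lintegral_swap (m2 x).aemeasurable
    _ = ∫⁻ x in Set.Ioi (0:ℝ), ∫⁻ y in Set.Ioi (0:ℝ),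
          volume {s ∈ Set.Ioo (0:ℝ) 1 | ENNReal.ofReal x < F s ∧ ENNReal.ofReal y < G s} := by
        apply lintegral_congr
        intro x
        apply lintegral_congr
        intro y
        apply lint_ite_one
        exact (hF measurableSet_Ioi).inter (hG measurableSet_Ioi)

lemma nested_of_downclosed {A B : Set ℝ} (hA : A ⊆ Set.Ioo (0:ℝ) 1)
    (hB : B ⊆ Set.Ioo (0:ℝ) 1)
    (hdA : ∀ ⦃s⦄, s ∈ A → ∀ ⦃s'⦄, s' ∈ Set.Ioo (0:ℝ) 1 → s' ≤ s → s' ∈ A)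
    (hdB : ∀ ⦃s⦄, s ∈ B → ∀ ⦃s'⦄, s' ∈ Set.Ioo (0:ℝ) 1 → s' ≤ s → s' ∈ B) :
    A ⊆ B ∨ B ⊆ A := by
  by_contra h
  push_neg at h
  obtain ⟨h1, h2⟩ := h
  rw [Set.not_subset] at h1 h2
  obtain ⟨sa, hsa, hsa'⟩ := h1
  obtain ⟨sb, hsb, hsb'⟩ := h2
  rcases le_total sa sb with hle | hle
  · exact hsa' (hdB hsb (hA hsa) hle)
  · exact hsb' (hdA hsa (hB hsb) hle)

lemma hardy_littlewood (f w : ℝ → ℝ≥0∞) (hf : Measurable f) (hw : Measurable w) :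
    ∫⁻ s in Set.Ioo (0:ℝ) 1, f s * w s
      ≤ ∫⁻ s in Set.Ioo (0:ℝ) 1, rearr f s * rearr w s := by
  rw [double_rep f w hf hw,
    double_rep (rearr f) (rearr w) (rearr_measurable f) (rearr_measurable w)]
  apply lintegral_mono
  intro x
  apply lintegral_mono
  intro y
  show volume {s ∈ Set.Ioo (0:ℝ) 1 | ENNReal.ofReal x < f s ∧ ENNReal.ofReal y < w s}
      ≤ volume {s ∈ Set.Ioo (0:ℝ) 1 | ENNReal.ofReal x < rearr f s ∧ ENNReal.ofReal y < rearr w s}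
  set A := {s ∈ Set.Ioo (0:ℝ) 1 | ENNReal.ofReal x < rearr f s} with hA_def
  set B := {s ∈ Set.Ioo (0:ℝ) 1 | ENNReal.ofReal y < rearr w s} with hB_def
  have hAval : volume A = distrib f (ENNReal.ofReal x) := by
    have : volume A = distrib (rearr f) (ENNReal.ofReal x) := rfl
    rw [this, distrib_rearr, min_eq_left (distrib_le_one _ _)]
  have hBval : volume B = distrib w (ENNReal.ofReal y) := by
    have : volume B = distrib (rearr w) (ENNReal.ofReal y) := rfl
    rw [this, distrib_rearr, min_eq_left (distrib_le_one _ _)]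
  have hsetr : {s ∈ Set.Ioo (0:ℝ) 1 | ENNReal.ofReal x < rearr f s ∧ ENNReal.ofReal y < rearr w s}
      = A ∩ B := by
    ext s
    simp only [hA_def, hB_def, Set.mem_setOf_eq, Set.mem_inter_iff]
    tauto
  have h1 : volume {s ∈ Set.Ioo (0:ℝ) 1 | ENNReal.ofReal x < f s ∧ ENNReal.ofReal y < w s}
      ≤ distrib f (ENNReal.ofReal x) := measure_mono (fun s hs => ⟨hs.1, hs.2.1⟩)
  have h2 : volume {s ∈ Set.Ioo (0:ℝ) 1 | ENNReal.ofReal x < f s ∧ ENNReal.ofReal y < w s}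
      ≤ distrib w (ENNReal.ofReal y) := measure_mono (fun s hs => ⟨hs.1, hs.2.2⟩)
  have hdA : ∀ ⦃s⦄, s ∈ A → ∀ ⦃s'⦄, s' ∈ Set.Ioo (0:ℝ) 1 → s' ≤ s → s' ∈ A := by
    intro s hs s' hs' hle
    exact ⟨hs', lt_of_lt_of_le hs.2 (rearr_antitone f hle)⟩
  have hdB : ∀ ⦃s⦄, s ∈ B → ∀ ⦃s'⦄, s' ∈ Set.Ioo (0:ℝ) 1 → s' ≤ s → s' ∈ B := by
    intro s hs s' hs' hle
    exact ⟨hs', lt_of_lt_of_le hs.2 (rearr_antitone w hle)⟩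
  rw [hsetr]
  rcases nested_of_downclosed (fun s hs => hs.1) (fun s hs => hs.1) hdA hdB with hss | hss
  · rw [Set.inter_eq_left.mpr hss, hAval]
    exact h1
  · rw [Set.inter_eq_right.mpr hss, hBval]
    exact h2

/-! ### Fubini exchange -/

lemma fubini_kernel (F g : ℝ → ℝ≥0∞) (hF : Measurable F) (hg : Measurable g) :
    ∫⁻ t in Set.Ioo (0:ℝ) 1, (∫⁻ s in Set.Ioo t 1, F s) * g t
      = ∫⁻ s in Set.Ioo (0:ℝ) 1, F s * ∫⁻ t in Set.Ioo 0 s, g t := by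
  have m1 : Measurable (Function.uncurry fun t s : ℝ =>
      (if t < s then F s else 0) * g t) := by
    apply Measurable.mul _ (hg.comp measurable_fst)
    apply Measurable.ite _ (hF.comp measurable_snd) measurable_const
    exact measurableSet_lt measurable_fst measurable_snd
  calc ∫⁻ t in Set.Ioo (0:ℝ) 1, (∫⁻ s in Set.Ioo t 1, F s) * g t
      = ∫⁻ t in Set.Ioo (0:ℝ) 1, ∫⁻ s in Set.Ioo (0:ℝ) 1,
          (if t < s then F s else 0) * g t := by
        apply setLIntegral_congr_fun_ae measurableSet_Ioo
        apply Filter.Eventually.of_forall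
        intro t ht
        have hstep : ∫⁻ s in Set.Ioo t 1, F s
            = ∫⁻ s in Set.Ioo (0:ℝ) 1, (if t < s then F s else 0) := by
          have hind : (fun s : ℝ => if t < s then F s else 0)
              = Set.indicator (Set.Ioi t) F := by
            ext s; simp [Set.indicator_apply, Set.mem_Ioi]
          rw [hind, lintegral_indicator measurableSet_Ioi,
            Measure.restrict_restrict measurableSet_Ioi]
          congr 1
          have : Set.Ioi t ∩ Set.Ioo (0:ℝ) 1 = Set.Ioo t 1 := by
            ext s
            simp only [Set.mem_inter_iff, Set.mem_Ioi, Set.mem_Ioo]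
            constructor
            · rintro ⟨h1, h2, h3⟩; exact ⟨h1, h3⟩
            · rintro ⟨h1, h2⟩; exact ⟨h1, lt_trans ht.1 h1, h2⟩
          rw [this]
        rw [hstep, ← lintegral_mul_const _ (Measurable.ite measurableSet_Ioi hF measurable_const)]
    _ = ∫⁻ s in Set.Ioo (0:ℝ) 1, ∫⁻ t in Set.Ioo (0:ℝ) 1,
          (if t < s then F s else 0) * g t :=
        MeasureTheory.lintegral_lintegral_swap m1.aemeasurable
    _ = ∫⁻ s in Set.Ioo (0:ℝ) 1, F s * ∫⁻ t in Set.Ioo 0 s, g t := by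
        apply setLIntegral_congr_fun_ae measurableSet_Ioo
        apply Filter.Eventually.of_forall
        intro s hs
        have heq : ∀ t : ℝ, (if t < s then F s else 0) * g t
            = F s * (if t < s then g t else 0) := by
          intro t
          by_cases h : t < s
          · rw [if_pos h, if_pos h]
          · rw [if_neg h, if_neg h, zero_mul, mul_zero]
        simp_rw [heq]
        rw [lintegral_const_mul _ (Measurable.ite measurableSet_Iio hg measurable_const)]
        congr 1
        have hind : (fun t : ℝ => if t < s then g t else 0)
            = Set.indicator (Set.Iio s) g := by
          ext t; simp [Set.indicator_apply, Set.mem_Iio]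
        rw [hind, lintegral_indicator measurableSet_Iio,
          Measure.restrict_restrict measurableSet_Iio]
        have hset2 : Set.Iio s ∩ Set.Ioo (0:ℝ) 1 = Set.Ioo 0 s := by
          ext t
          simp only [Set.mem_inter_iff, Set.mem_Iio, Set.mem_Ioo]
          constructor
          · rintro ⟨h1, h2, h3⟩; exact ⟨h2, h1⟩
          · rintro ⟨h1, h2⟩; exact ⟨h2, h1, lt_trans h2 hs.2⟩
        rw [hset2]

/-! ### Norm utilities -/

/-- The second associate ("bidual") functional. -/
def bidual (ρ : (ℝ → ℝ≥0∞) → ℝ≥0∞) (u : ℝ → ℝ≥0∞) : ℝ≥0∞ :=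
  ⨆ (g : ℝ → ℝ≥0∞) (_ : Measurable g ∧ assoc ρ g ≤ 1),
    ∫⁻ t in Set.Ioo (0:ℝ) 1, u t * g t

variable {ρ : (ℝ → ℝ≥0∞) → ℝ≥0∞}

lemma rho_congr (hρ : IsRiNorm ρ) {f g : ℝ → ℝ≥0∞} (hf : Measurable f) (hg : Measurable g)
    (h : f =ᵐ[volume.restrict (Set.Ioo (0:ℝ) 1)] g) : ρ f = ρ g := by
  apply le_antisymm
  · exact hρ.2.2.2.1 f g hf hg (h.le)
  · exact hρ.2.2.2.1 g f hg hf (h.symm.le)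

lemma rho_zero (hρ : IsRiNorm ρ) : ρ (fun _ => 0) = 0 :=
  (hρ.1 _ measurable_const).mpr (Filter.EventuallyEq.refl _ _)

lemma rho_one_ne_zero (hρ : IsRiNorm ρ) : ρ (fun _ => 1) ≠ 0 := by
  intro h0
  have h := (hρ.1 _ measurable_const).mp h0
  have : (volume.restrict (Set.Ioo (0:ℝ) 1)) {t | ¬ ((fun _ => (1:ℝ≥0∞)) t = (0 : ℝ → ℝ≥0∞) t)} = 0 :=
    h
  rw [show {t : ℝ | ¬ ((fun _ => (1:ℝ≥0∞)) t = (0 : ℝ → ℝ≥0∞) t)} = Set.univ from by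
    ext t; simp] at this
  rw [Measure.restrict_apply_univ] at this
  simp [Real.volume_Ioo] at this

lemma rho_smul (hρ : IsRiNorm ρ) {f : ℝ → ℝ≥0∞} (hf : Measurable f) {a : ℝ} (ha : 0 ≤ a) :
    ρ (fun t => ENNReal.ofReal a * f t) = ENNReal.ofReal a * ρ f :=
  hρ.2.1 f hf a ha

lemma exists_const_test (hρ : IsRiNorm ρ) :
    ∃ a : ℝ, 0 < a ∧ ρ (fun _ => ENNReal.ofReal a) ≤ 1 := by
  have h1 : ρ (fun _ => 1) < ⊤ := hρ.2.2.2.2.2.1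
  have h0 : ρ (fun _ => 1) ≠ 0 := rho_one_ne_zero hρ
  set X := ρ (fun _ => (1:ℝ≥0∞)) with hX
  have hXpos : 0 < X.toReal := ENNReal.toReal_pos h0 h1.ne
  refine ⟨X.toReal⁻¹, inv_pos.mpr hXpos, ?_⟩
  have heq : ρ (fun _ => ENNReal.ofReal X.toReal⁻¹)
      = ρ (fun t => ENNReal.ofReal X.toReal⁻¹ * (fun _ => (1:ℝ≥0∞)) t) := by
    congr 1
    ext t
    rw [mul_one]
  rw [heq, rho_smul hρ measurable_const (le_of_lt (inv_pos.mpr hXpos))]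
  rw [ENNReal.ofReal_inv_of_pos hXpos, ENNReal.ofReal_toReal h1.ne]
  rw [← hX, ENNReal.inv_mul_cancel h0 h1.ne]

lemma pair_le_assoc (hρ : IsRiNorm ρ) {v g : ℝ → ℝ≥0∞} (hg : Measurable g) (hg1 : ρ g ≤ 1) :
    ∫⁻ t in Set.Ioo (0:ℝ) 1, v t * g t ≤ assoc ρ v :=
  le_iSup₂ (f := fun (g : ℝ → ℝ≥0∞) (_ : Measurable g ∧ ρ g ≤ 1) =>
    ∫⁻ t in Set.Ioo (0:ℝ) 1, v t * g t) g ⟨hg, hg1⟩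

lemma assoc_eq_zero (hρ : IsRiNorm ρ) {v : ℝ → ℝ≥0∞} (hv : Measurable v)
    (h : assoc ρ v = 0) : v =ᵐ[volume.restrict (Set.Ioo (0:ℝ) 1)] 0 := by
  obtain ⟨a, ha, hle⟩ := exists_const_test hρ
  have hint : ∫⁻ t in Set.Ioo (0:ℝ) 1, v t * ENNReal.ofReal a = 0 := by
    apply le_antisymm _ (zero_le)
    rw [← h]
    exact pair_le_assoc hρ measurable_const hle
  have hmeas : Measurable (fun t => v t * ENNReal.ofReal a) := hv.mul_const _
  have := (lintegral_eq_zero_iff hmeas).mp hint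
  filter_upwards [this] with t ht
  simp only [Pi.zero_apply] at ht ⊢
  rcases mul_eq_zero.mp ht with h' | h'
  · exact h'
  · exact absurd h' (by simp [ENNReal.ofReal_eq_zero, not_le, ha])

lemma assoc_smul_le (ρ : (ℝ → ℝ≥0∞) → ℝ≥0∞) (k : ℝ≥0∞) {v : ℝ → ℝ≥0∞} (hv : Measurable v) :
    assoc ρ (fun t => k * v t) ≤ k * assoc ρ v := by
  apply iSup₂_le
  intro g hg
  have heq : ∫⁻ t in Set.Ioo (0:ℝ) 1, (k * v t) * g t
      = k * ∫⁻ t in Set.Ioo (0:ℝ) 1, v t * g t := by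
    rw [← lintegral_const_mul k (f := fun t => v t * g t) (hv.mul hg.1)]
    apply lintegral_congr
    intro t
    ring
  rw [heq]
  exact mul_le_mul_right (le_iSup₂ (f := fun (g : ℝ → ℝ≥0∞)
    (_ : Measurable g ∧ ρ g ≤ 1) => ∫⁻ t in Set.Ioo (0:ℝ) 1, v t * g t) g hg) k

lemma bidual_smul_le (ρ : (ℝ → ℝ≥0∞) → ℝ≥0∞) (k : ℝ≥0∞) {v : ℝ → ℝ≥0∞} (hv : Measurable v) :
    bidual ρ (fun t => k * v t) ≤ k * bidual ρ v := by
  apply iSup₂_le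
  intro g hg
  have heq : ∫⁻ t in Set.Ioo (0:ℝ) 1, (k * v t) * g t
      = k * ∫⁻ t in Set.Ioo (0:ℝ) 1, v t * g t := by
    rw [← lintegral_const_mul k (f := fun t => v t * g t) (hv.mul hg.1)]
    apply lintegral_congr
    intro t
    ring
  rw [heq]
  exact mul_le_mul_right (le_iSup₂ (f := fun (g : ℝ → ℝ≥0∞)
    (_ : Measurable g ∧ assoc ρ g ≤ 1) => ∫⁻ t in Set.Ioo (0:ℝ) 1, v t * g t) g hg) k

lemma bidual_mono (ρ : (ℝ → ℝ≥0∞) → ℝ≥0∞) {u₁ u₂ : ℝ → ℝ≥0∞}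
    (h : ∀ t, u₁ t ≤ u₂ t) : bidual ρ u₁ ≤ bidual ρ u₂ := by
  apply iSup₂_le
  intro g hg
  refine le_trans (lintegral_mono fun t => mul_le_mul_left (h t) (g t)) ?_
  exact le_iSup₂ (f := fun (g : ℝ → ℝ≥0∞)
    (_ : Measurable g ∧ assoc ρ g ≤ 1) => ∫⁻ t in Set.Ioo (0:ℝ) 1, u₂ t * g t) g hg

lemma hoelder (hρ : IsRiNorm ρ) {u v : ℝ → ℝ≥0∞} (hu : Measurable u) (hv : Measurable v) :
    ∫⁻ t in Set.Ioo (0:ℝ) 1, u t * v t ≤ ρ u * assoc ρ v := by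
  rcases eq_or_ne (ρ u) 0 with h0 | h0
  · have hu0 : u =ᵐ[volume.restrict (Set.Ioo (0:ℝ) 1)] 0 := (hρ.1 u hu).mp h0
    have : (fun t => u t * v t) =ᵐ[volume.restrict (Set.Ioo (0:ℝ) 1)] 0 := by
      filter_upwards [hu0] with t ht
      simp only [Pi.zero_apply] at ht ⊢
      rw [ht, zero_mul]
    rw [lintegral_congr_ae this]
    simp
  rcases eq_or_ne (assoc ρ v) 0 with hv0 | hv0
  · have hv0' : v =ᵐ[volume.restrict (Set.Ioo (0:ℝ) 1)] 0 := assoc_eq_zero hρ hv hv0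
    have : (fun t => u t * v t) =ᵐ[volume.restrict (Set.Ioo (0:ℝ) 1)] 0 := by
      filter_upwards [hv0'] with t ht
      simp only [Pi.zero_apply] at ht ⊢
      rw [ht, mul_zero]
    rw [lintegral_congr_ae this]
    simp
  have key : ∀ r : ℝ, ρ u < ENNReal.ofReal r →
      ∫⁻ t in Set.Ioo (0:ℝ) 1, u t * v t ≤ ENNReal.ofReal r * assoc ρ v := by
    intro r hr
    have hrpos : 0 < r := by
      by_contra hc
      push_neg at hc
      rw [ENNReal.ofReal_eq_zero.mpr hc] at hr
      exact absurd hr (by simp)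
    set g' := fun t => ENNReal.ofReal r⁻¹ * u t with hg'
    have hg'me : Measurable g' := hu.const_mul _
    have hg'1 : ρ g' ≤ 1 := by
      rw [hg']
      rw [rho_smul hρ hu (le_of_lt (inv_pos.mpr hrpos))]
      calc ENNReal.ofReal r⁻¹ * ρ u ≤ ENNReal.ofReal r⁻¹ * ENNReal.ofReal r :=
        mul_le_mul_right hr.le _
      _ = ENNReal.ofReal (r⁻¹ * r) := (ENNReal.ofReal_mul (le_of_lt (inv_pos.mpr hrpos))).symm
      _ = 1 := by rw [inv_mul_cancel₀ hrpos.ne', ENNReal.ofReal_one]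
    have hpair : ∫⁻ t in Set.Ioo (0:ℝ) 1, v t * g' t ≤ assoc ρ v :=
      pair_le_assoc hρ hg'me hg'1
    have hcalc : ∫⁻ t in Set.Ioo (0:ℝ) 1, u t * v t
        = ENNReal.ofReal r * ∫⁻ t in Set.Ioo (0:ℝ) 1, v t * g' t := by
      rw [← lintegral_const_mul _ (f := fun t => v t * g' t) (hv.mul hg'me)]
      apply lintegral_congr
      intro t
      rw [hg']
      have : ENNReal.ofReal r * (v t * (ENNReal.ofReal r⁻¹ * u t))
          = (ENNReal.ofReal r * ENNReal.ofReal r⁻¹) * (u t * v t) := by ring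
      rw [this, ← ENNReal.ofReal_mul hrpos.le, mul_inv_cancel₀ hrpos.ne', ENNReal.ofReal_one,
        one_mul]
    rw [hcalc]
    exact mul_le_mul_right hpair _
  rcases eq_or_ne (assoc ρ v) ⊤ with hvt | hvt
  · rw [hvt, ENNReal.mul_top h0]
    exact le_top
  rcases eq_or_ne (ρ u) ⊤ with hut | hut
  · rw [hut, ENNReal.top_mul hv0]
    exact le_top
  apply ENNReal.le_of_forall_pos_le_add
  intro ε hε hfin
  set T := (assoc ρ v).toReal with hT
  have hTpos : 0 < T + 1 := by positivity
  set δ := (ε : ℝ) / (T + 1) with hδ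
  have hδpos : 0 < δ := div_pos hε hTpos
  have hstep := key ((ρ u).toReal + δ) (by
    rw [ENNReal.ofReal_add ENNReal.toReal_nonneg hδpos.le, ENNReal.ofReal_toReal hut]
    exact ENNReal.lt_add_right hut (by simp [ENNReal.ofReal_eq_zero, not_le, hδpos]))
  refine le_trans hstep ?_
  rw [ENNReal.ofReal_add ENNReal.toReal_nonneg hδpos.le, ENNReal.ofReal_toReal hut,
    add_mul]
  apply add_le_add_right
  have hbound : assoc ρ v ≤ ENNReal.ofReal (T + 1) := by
    have h1 : assoc ρ v = ENNReal.ofReal T := by rw [hT, ENNReal.ofReal_toReal hvt]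
    rw [h1]
    exact ENNReal.ofReal_le_ofReal (by linarith)
  calc ENNReal.ofReal δ * assoc ρ v ≤ ENNReal.ofReal δ * ENNReal.ofReal (T + 1) :=
      mul_le_mul_right hbound _
  _ = ENNReal.ofReal (δ * (T + 1)) := (ENNReal.ofReal_mul hδpos.le).symm
  _ = ENNReal.ofReal (ε : ℝ) := by
      rw [hδ, div_mul_cancel₀]
      exact hTpos.ne'
  _ = (ε : ℝ≥0∞) := ENNReal.ofReal_coe_nnreal

lemma iSup_min_nat (a : ℝ≥0∞) : ⨆ n : ℕ, min a (n : ℝ≥0∞) = a := by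
  apply le_antisymm (iSup_le fun n => min_le_left _ _)
  rcases eq_or_ne a ⊤ with ha | ha
  · subst ha
    have hmin : ∀ n : ℕ, min (⊤:ℝ≥0∞) (n:ℝ≥0∞) = (n:ℝ≥0∞) := fun n => min_eq_right le_top
    simp_rw [hmin]
    exact le_of_eq ENNReal.iSup_natCast.symm
  · obtain ⟨n, hn⟩ := ENNReal.exists_nat_gt ha
    calc a = min a n := (min_eq_left hn.le).symm
    _ ≤ ⨆ n : ℕ, min a (n : ℝ≥0∞) := le_iSup (fun n : ℕ => min a (n : ℝ≥0∞)) n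

lemma rho_fatou (hρ : IsRiNorm ρ) (un : ℕ → ℝ → ℝ≥0∞) (hun : ∀ n, Measurable (un n))
    (u : ℝ → ℝ≥0∞) (hu : Measurable u)
    (h : ∀ᵐ t ∂(volume.restrict (Set.Ioo (0:ℝ) 1)),
      Filter.Tendsto (fun n => un n t) Filter.atTop (nhds (u t))) :
    ρ u ≤ Filter.liminf (fun n => ρ (un n)) Filter.atTop := by
  set hn := fun (n : ℕ) (t : ℝ) => ⨅ k : ℕ, un (k + n) t with hhn
  have hnmeas : ∀ n, Measurable (hn n) := fun n => Measurable.iInf (fun k => hun (k + n))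
  have hnmono : ∀ t, Monotone (fun n => hn n t) := by
    intro t n m hnm
    apply le_iInf
    intro k
    have : k + m = (k + (m - n)) + n := by omega
    rw [this]
    exact iInf_le _ _
  have hnsup : ∀ᵐ t ∂(volume.restrict (Set.Ioo (0:ℝ) 1)), (⨆ n, hn n t) = u t := by
    filter_upwards [h] with t ht
    have hlim : Filter.liminf (fun n => un n t) Filter.atTop = u t := ht.liminf_eq
    rw [← hlim, Filter.liminf_eq_iSup_iInf_of_nat']
  have h5 := hρ.2.2.2.2.1 hn u hnmeas hu
    (Filter.Eventually.of_forall fun t => hnmono t) hnsup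
  rw [← h5]
  apply iSup_le
  intro n
  have : ρ (hn n) ≤ ⨅ k, ρ (un (k + n)) := by
    apply le_iInf
    intro k
    apply hρ.2.2.2.1 _ _ (hnmeas n) (hun (k + n))
    apply Filter.Eventually.of_forall
    intro t
    exact iInf_le _ _
  refine le_trans this ?_
  rw [Filter.liminf_eq_iSup_iInf_of_nat']
  exact le_iSup (fun n => ⨅ k, ρ (un (k + n))) n

set_option synthInstance.maxHeartbeats 1000000
set_option maxHeartbeats 1000000


/-! ### Lorentz–Luxemburg biduality -/

lemma ll_core (hρ : IsRiNorm ρ) {v : ℝ → ℝ≥0∞} (hv : Measurable v) {B : ℝ}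
    (hbd : ∀ t, v t ≤ ENNReal.ofReal B)
    (hbid : bidual ρ v < 1) : ρ v ≤ 1 := by
  by_contra hc
  push_neg at hc
  have hB : 0 ≤ B := by
    by_contra hB
    push_neg at hB
    have : ∀ t, v t = 0 := fun t => le_antisymm (by
      simpa [ENNReal.ofReal_eq_zero.mpr hB.le] using hbd t) (zero_le)
    have h0 : ρ v = 0 := by
      rw [show v = (fun _ => (0:ℝ≥0∞)) from funext this]
      exact rho_zero hρ
    rw [h0] at hc
    simp at hc
  haveI hfin : IsFiniteMeasure (volume.restrict (Set.Ioo (0:ℝ) 1)) := by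
    constructor
    rw [Measure.restrict_apply_univ]
    simp [Real.volume_Ioo]
  set μ := volume.restrict (Set.Ioo (0:ℝ) 1) with hμ
  set vr := fun t => (v t).toReal with hvrdef
  have hvrmeas : Measurable vr := hv.ennreal_toReal
  have hvfin : ∀ t, v t ≠ ⊤ := fun t => (lt_of_le_of_lt (hbd t) ENNReal.ofReal_lt_top).ne
  have hvrofReal : ∀ t, ENNReal.ofReal (vr t) = v t := fun t => ENNReal.ofReal_toReal (hvfin t)
  have hvrbd : ∀ t, ‖vr t‖ ≤ B := by
    intro t
    rw [Real.norm_eq_abs, abs_of_nonneg ENNReal.toReal_nonneg]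
    calc vr t ≤ (ENNReal.ofReal B).toReal := ENNReal.toReal_mono ENNReal.ofReal_ne_top (hbd t)
    _ = B := ENNReal.toReal_ofReal hB
  have hmem : MemLp vr 2 μ := MemLp.of_bound hvrmeas.aestronglyMeasurable B
    (Filter.Eventually.of_forall hvrbd)
  set x := hmem.toLp vr with hx
  set S : Set (Lp ℝ 2 μ) := {y | (∀ᵐ t ∂μ, 0 ≤ y t) ∧
    ρ (fun t => ENNReal.ofReal (y t)) ≤ 1} with hSdef
  have hymeas : ∀ y : Lp ℝ 2 μ, Measurable (fun t => ENNReal.ofReal (y t)) :=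
    fun y => ENNReal.measurable_ofReal.comp (Lp.stronglyMeasurable y).measurable
  -- convexity
  have hSconv : Convex ℝ S := by
    intro y1 h1 y2 h2 a b ha hb hab
    have hcoe : ⇑(a • y1 + b • y2) =ᵐ[μ] fun t => a * y1 t + b * y2 t := by
      filter_upwards [Lp.coeFn_add (a • y1) (b • y2), Lp.coeFn_smul a y1, Lp.coeFn_smul b y2]
        with t hadd hs1 hs2
      rw [hadd]
      simp only [Pi.add_apply, hs1, hs2, Pi.smul_apply, smul_eq_mul]
    constructor
    · filter_upwards [hcoe, h1.1, h2.1] with t hct h1t h2t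
      rw [hct]
      positivity
    · have hmeq : (fun t => ENNReal.ofReal ((a • y1 + b • y2 : Lp ℝ 2 μ) t))
          =ᵐ[μ] (fun t => ENNReal.ofReal a * ENNReal.ofReal (y1 t)
            + ENNReal.ofReal b * ENNReal.ofReal (y2 t)) := by
        filter_upwards [hcoe, h1.1, h2.1] with t hct h1t h2t
        rw [hct, ENNReal.ofReal_add (by positivity) (by positivity),
          ENNReal.ofReal_mul ha, ENNReal.ofReal_mul hb]
      have hm2 : Measurable (fun t => ENNReal.ofReal a * ENNReal.ofReal (y1 t)
          + ENNReal.ofReal b * ENNReal.ofReal (y2 t)) :=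
        ((hymeas y1).const_mul _).add ((hymeas y2).const_mul _)
      rw [rho_congr hρ (hymeas _) hm2 hmeq]
      calc ρ (fun t => ENNReal.ofReal a * ENNReal.ofReal (y1 t)
            + ENNReal.ofReal b * ENNReal.ofReal (y2 t))
          ≤ ρ (fun t => ENNReal.ofReal a * ENNReal.ofReal (y1 t))
            + ρ (fun t => ENNReal.ofReal b * ENNReal.ofReal (y2 t)) :=
          hρ.2.2.1 _ _ ((hymeas y1).const_mul _) ((hymeas y2).const_mul _)
        _ = ENNReal.ofReal a * ρ (fun t => ENNReal.ofReal (y1 t))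
            + ENNReal.ofReal b * ρ (fun t => ENNReal.ofReal (y2 t)) := by
          rw [rho_smul hρ (hymeas y1) ha, rho_smul hρ (hymeas y2) hb]
        _ ≤ ENNReal.ofReal a * 1 + ENNReal.ofReal b * 1 :=
          add_le_add (mul_le_mul_right h1.2 _) (mul_le_mul_right h2.2 _)
        _ = 1 := by
          rw [mul_one, mul_one, ← ENNReal.ofReal_add ha hb, hab, ENNReal.ofReal_one]
  -- closedness
  have hSclosed : IsClosed S := by
    apply IsSeqClosed.isClosed
    intro yn y hyn hlim
    have help : ∀ n, eLpNorm (⇑(yn n) - ⇑y) 2 μ = ENNReal.ofReal ‖yn n - y‖ := by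
      intro n
      rw [Lp.norm_def, ENNReal.ofReal_toReal (Lp.eLpNorm_ne_top _)]
      exact (eLpNorm_congr_ae (Lp.coeFn_sub _ _)).symm
    have htm : TendstoInMeasure μ (fun n => ⇑(yn n)) Filter.atTop ⇑y := by
      apply tendstoInMeasure_of_tendsto_eLpNorm (p := 2) (by norm_num)
        (fun n => (Lp.stronglyMeasurable (yn n)).aestronglyMeasurable)
        (Lp.stronglyMeasurable y).aestronglyMeasurable
      simp_rw [help]
      rw [show (0:ℝ≥0∞) = ENNReal.ofReal 0 by simp]
      apply ENNReal.tendsto_ofReal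
      exact tendsto_iff_norm_sub_tendsto_zero.mp hlim
    obtain ⟨ns, hns, htae⟩ := htm.exists_seq_tendsto_ae
    constructor
    · have hall : ∀ᵐ t ∂μ, ∀ i : ℕ, 0 ≤ yn (ns i) t :=
        ae_all_iff.mpr fun i => (hyn (ns i)).1
      filter_upwards [htae, hall] with t ht hpos
      exact ge_of_tendsto ht (Filter.Eventually.of_forall hpos)
    · have hfatou := rho_fatou hρ (fun i t => ENNReal.ofReal (yn (ns i) t))
        (fun i => hymeas _) (fun t => ENNReal.ofReal (y t)) (hymeas y)
        (by
          filter_upwards [htae] with t ht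
          exact ENNReal.tendsto_ofReal ht)
      refine le_trans hfatou ?_
      have hle : ∀ i : ℕ, ρ (fun t => ENNReal.ofReal (yn (ns i) t)) ≤ 1 :=
        fun i => (hyn (ns i)).2
      calc Filter.liminf (fun i => ρ (fun t => ENNReal.ofReal (yn (ns i) t))) Filter.atTop
          ≤ Filter.liminf (fun _ : ℕ => (1:ℝ≥0∞)) Filter.atTop :=
          Filter.liminf_le_liminf (Filter.Eventually.of_forall hle)
        _ = 1 := Filter.liminf_const 1
  -- x is outside
  have hxrho : ρ (fun t => ENNReal.ofReal (x t)) = ρ v := by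
    apply rho_congr hρ (hymeas x) hv
    filter_upwards [hmem.coeFn_toLp] with t ht
    rw [show x t = vr t from ht]
    exact hvrofReal t
  have hxS : x ∉ S := by
    intro hxin
    rw [hSdef] at hxin
    exact absurd (hxrho ▸ hxin.2) (not_le.mpr hc)
  -- separation
  obtain ⟨flin, c, hsep, hcx⟩ := geometric_hahn_banach_closed_point hSconv hSclosed hxS
  have h0S : (0 : Lp ℝ 2 μ) ∈ S := by
    constructor
    · filter_upwards [Lp.coeFn_zero (E := ℝ) (p := 2) (μ := μ)] with t ht
      rw [ht]
      simp
    · have hz : (fun t => ENNReal.ofReal ((0 : Lp ℝ 2 μ) t)) =ᵐ[μ] (fun _ => (0:ℝ≥0∞)) := by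
        filter_upwards [Lp.coeFn_zero (E := ℝ) (p := 2) (μ := μ)] with t ht
        rw [ht]
        simp
      rw [rho_congr hρ (hymeas _) measurable_const hz, rho_zero hρ]
      exact zero_le_one
  have hc0 : 0 < c := by
    have := hsep 0 h0S
    rwa [map_zero] at this
  -- Riesz representation
  set w2 := (InnerProductSpace.toDual ℝ (Lp ℝ 2 μ)).symm flin with hw2
  have hinner : ∀ y : Lp ℝ 2 μ, flin y = ∫ t, w2 t * y t ∂μ := by
    intro y
    have h1 : @inner ℝ _ _ w2 y = flin y := InnerProductSpace.toDual_symm_apply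
    rw [← h1, L2.inner_def]
    apply integral_congr_ae
    apply Filter.Eventually.of_forall
    intro t
    simp [RCLike.inner_apply, starRingEnd_apply, mul_comm]
  have hw2meas : Measurable (⇑w2) := (Lp.stronglyMeasurable w2).measurable
  have hw2int : Integrable (⇑w2) μ := (Lp.memLp w2).integrable one_le_two
  set wp := fun t => max (w2 t) 0 with hwpdef
  have hwpmeas : Measurable wp := hw2meas.max measurable_const
  have hwpnn : ∀ t, 0 ≤ wp t := fun t => le_max_right _ _
  have hwpint : Integrable wp μ := by
    have := hw2int.pos_part
    simpa [hwpdef] using this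
  set Epos := {t : ℝ | 0 < w2 t} with hEposdef
  have hEpos : MeasurableSet Epos := measurableSet_lt measurable_const hw2meas
  have hwp0 : ∀ t, t ∉ Epos → wp t = 0 := by
    intro t ht
    simp only [hEposdef, Set.mem_setOf_eq, not_lt] at ht
    exact max_eq_right ht
  have hwppos : ∀ t, t ∈ Epos → wp t = w2 t := fun t ht => max_eq_left (le_of_lt ht)
  set gE := fun t => ENNReal.ofReal (wp t) with hgEdef
  have hgEmeas : Measurable gE := ENNReal.measurable_ofReal.comp hwpmeas
  -- KEY1 : pairing with any ball element is ≤ c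
  have key1 : ∀ b : ℝ → ℝ≥0∞, Measurable b → ρ b ≤ 1 →
      ∫⁻ t in Set.Ioo (0:ℝ) 1, b t * gE t ≤ ENNReal.ofReal c := by
    intro b hbmeas hb1
    set bn := fun (n : ℕ) (t : ℝ) => if t ∈ Epos then min (b t) (n:ℝ≥0∞) else 0 with hbndef
    have hbnmeas : ∀ n, Measurable (bn n) :=
      fun n => Measurable.ite hEpos (hbmeas.min measurable_const) measurable_const
    have hbnle : ∀ n t, bn n t ≤ b t := by
      intro n t
      by_cases ht : t ∈ Epos
      · simp only [hbndef, if_pos ht]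
        exact min_le_left _ _
      · simp only [hbndef, if_neg ht]
        exact zero_le
    have hbnlen : ∀ n t, bn n t ≤ (n:ℝ≥0∞) := by
      intro n t
      by_cases ht : t ∈ Epos
      · simp only [hbndef, if_pos ht]
        exact min_le_right _ _
      · simp only [hbndef, if_neg ht]
        exact zero_le
    have hbnfin : ∀ n t, bn n t ≠ ⊤ :=
      fun n t => (lt_of_le_of_lt (hbnlen n t) (ENNReal.natCast_lt_top n)).ne
    have hbnρ : ∀ n, ρ (bn n) ≤ 1 := fun n => le_trans
      (hρ.2.2.2.1 _ _ (hbnmeas n) hbmeas (Filter.Eventually.of_forall (hbnle n))) hb1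
    set rn := fun (n:ℕ) (t:ℝ) => (bn n t).toReal with hrndef
    have hrnmeas : ∀ n, Measurable (rn n) := fun n => (hbnmeas n).ennreal_toReal
    have hrnofReal : ∀ n t, ENNReal.ofReal (rn n t) = bn n t :=
      fun n t => ENNReal.ofReal_toReal (hbnfin n t)
    have hrnnn : ∀ n t, 0 ≤ rn n t := fun n t => ENNReal.toReal_nonneg
    have hrnbd : ∀ n t, ‖rn n t‖ ≤ (n:ℝ) := by
      intro n t
      rw [Real.norm_eq_abs, abs_of_nonneg (hrnnn n t)]
      calc rn n t ≤ ((n:ℝ≥0∞)).toReal := ENNReal.toReal_mono (ENNReal.natCast_ne_top n) (hbnlen n t)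
      _ = (n:ℝ) := by simp
    have hmemn : ∀ n, MemLp (rn n) 2 μ := fun n => MemLp.of_bound
      (hrnmeas n).aestronglyMeasurable _ (Filter.Eventually.of_forall (hrnbd n))
    have hxnS : ∀ n, (hmemn n).toLp (rn n) ∈ S := by
      intro n
      constructor
      · filter_upwards [(hmemn n).coeFn_toLp] with t ht
        rw [show ((hmemn n).toLp (rn n)) t = rn n t from ht]
        exact hrnnn n t
      · have hcongr : (fun t => ENNReal.ofReal (((hmemn n).toLp (rn n)) t)) =ᵐ[μ] bn n := by
          filter_upwards [(hmemn n).coeFn_toLp] with t ht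
          rw [show ((hmemn n).toLp (rn n)) t = rn n t from ht, hrnofReal]
        rw [rho_congr hρ (hymeas _) (hbnmeas n) hcongr]
        exact hbnρ n
    have hlt : ∀ n, ∫ t, wp t * rn n t ∂μ < c := by
      intro n
      have h1 := hsep _ (hxnS n)
      rw [hinner] at h1
      refine lt_of_le_of_lt (le_of_eq ?_) h1
      apply integral_congr_ae
      filter_upwards [(hmemn n).coeFn_toLp] with t ht
      rw [show ((hmemn n).toLp (rn n)) t = rn n t from ht]
      by_cases hE : t ∈ Epos
      · rw [hwppos t hE]
      · have hz : rn n t = 0 := by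
          simp [hrndef, hbndef, if_neg hE]
        rw [hz, mul_zero, mul_zero]
    have hint : ∀ n, Integrable (fun t => wp t * rn n t) μ := by
      intro n
      have h1 := Integrable.bdd_mul hwpint (hrnmeas n).aestronglyMeasurable (Filter.Eventually.of_forall (hrnbd n))
      exact h1.congr (Filter.Eventually.of_forall fun t => mul_comm _ _)
    have hlint : ∀ n, ∫⁻ t in Set.Ioo (0:ℝ) 1, bn n t * gE t ≤ ENNReal.ofReal c := by
      intro n
      have h1 : ENNReal.ofReal (∫ t, wp t * rn n t ∂μ)
          = ∫⁻ t in Set.Ioo (0:ℝ) 1, bn n t * gE t := by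
        rw [ofReal_integral_eq_lintegral_ofReal (hint n)
          (Filter.Eventually.of_forall fun t => mul_nonneg (hwpnn t) (hrnnn n t))]
        apply lintegral_congr
        intro t
        rw [ENNReal.ofReal_mul (hwpnn t), hrnofReal]
        exact mul_comm _ _
      rw [← h1]
      exact ENNReal.ofReal_le_ofReal (hlt n).le
    have hptw : ∀ t, b t * gE t = ⨆ n, bn n t * gE t := by
      intro t
      by_cases ht : t ∈ Epos
      · have hbnt : ∀ n : ℕ, bn n t = min (b t) (n:ℝ≥0∞) := fun n => if_pos ht
        simp_rw [hbnt]
        rw [← ENNReal.iSup_mul, iSup_min_nat]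
      · have hgE0 : gE t = 0 := by
          rw [hgEdef]
          simp [hwp0 t ht]
        have hbnt : ∀ n : ℕ, bn n t = 0 := fun n => if_neg ht
        simp [hgE0, hbnt]
    have hmono : Monotone bn := by
      intro n m hnm t
      by_cases ht : t ∈ Epos
      · simp only [hbndef, if_pos ht]
        exact min_le_min le_rfl (by exact_mod_cast hnm)
      · simp only [hbndef, if_neg ht]
        exact le_rfl
    calc ∫⁻ t in Set.Ioo (0:ℝ) 1, b t * gE t
        = ∫⁻ t in Set.Ioo (0:ℝ) 1, ⨆ n, bn n t * gE t := lintegral_congr hptw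
      _ = ⨆ n, ∫⁻ t in Set.Ioo (0:ℝ) 1, bn n t * gE t :=
        lintegral_iSup (fun n => (hbnmeas n).mul hgEmeas)
          (fun n m hnm t => mul_le_mul_left (hmono hnm t) (gE t))
      _ ≤ ENNReal.ofReal c := iSup_le hlint
  have hassoc : assoc ρ gE ≤ ENNReal.ofReal c := by
    apply iSup₂_le
    intro g hg
    refine le_trans (le_of_eq ?_) (key1 g hg.1 hg.2)
    apply lintegral_congr
    intro t
    exact mul_comm _ _
  -- KEY2
  have hxval : (c:ℝ) < ∫ t, wp t * vr t ∂μ := by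
    have h1 : flin x = ∫ t, w2 t * vr t ∂μ := by
      rw [hinner]
      apply integral_congr_ae
      filter_upwards [hmem.coeFn_toLp] with t ht
      rw [show x t = vr t from ht]
    have hint1 : Integrable (fun t => w2 t * vr t) μ := by
      have h2 := Integrable.bdd_mul hw2int hvrmeas.aestronglyMeasurable
        (Filter.Eventually.of_forall hvrbd)
      exact h2.congr (Filter.Eventually.of_forall fun t => mul_comm _ _)
    have hint2 : Integrable (fun t => wp t * vr t) μ := by
      have h2 := Integrable.bdd_mul hwpint hvrmeas.aestronglyMeasurable
        (Filter.Eventually.of_forall hvrbd)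
      exact h2.congr (Filter.Eventually.of_forall fun t => mul_comm _ _)
    have h2 : ∫ t, w2 t * vr t ∂μ ≤ ∫ t, wp t * vr t ∂μ := by
      apply integral_mono hint1 hint2
      intro t
      exact mul_le_mul_of_nonneg_right (le_max_left _ _) ENNReal.toReal_nonneg
    calc (c:ℝ) < flin x := hcx
      _ = ∫ t, w2 t * vr t ∂μ := h1
      _ ≤ ∫ t, wp t * vr t ∂μ := h2
  have hint2' : Integrable (fun t => wp t * vr t) μ := by
    have h2 := Integrable.bdd_mul hwpint hvrmeas.aestronglyMeasurable (Filter.Eventually.of_forall hvrbd)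
    exact h2.congr (Filter.Eventually.of_forall fun t => mul_comm _ _)
  have hlx : ENNReal.ofReal c < ∫⁻ t in Set.Ioo (0:ℝ) 1, v t * gE t := by
    have h1 : ∫⁻ t in Set.Ioo (0:ℝ) 1, v t * gE t
        = ENNReal.ofReal (∫ t, wp t * vr t ∂μ) := by
      rw [ofReal_integral_eq_lintegral_ofReal hint2'
        (Filter.Eventually.of_forall fun t => mul_nonneg (hwpnn t) ENNReal.toReal_nonneg)]
      apply lintegral_congr
      intro t
      rw [ENNReal.ofReal_mul (hwpnn t), hvrofReal]
      exact (mul_comm _ _).symm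
    rw [h1]
    exact (ENNReal.ofReal_lt_ofReal_iff (lt_trans hc0 hxval)).mpr hxval
  -- contradiction
  set g' := fun t => ENNReal.ofReal c⁻¹ * gE t with hg'def
  have hg'meas : Measurable g' := hgEmeas.const_mul _
  have hg'assoc : assoc ρ g' ≤ 1 := by
    refine le_trans (assoc_smul_le ρ _ hgEmeas) ?_
    calc ENNReal.ofReal c⁻¹ * assoc ρ gE ≤ ENNReal.ofReal c⁻¹ * ENNReal.ofReal c :=
      mul_le_mul_right hassoc _
    _ = 1 := by
      rw [← ENNReal.ofReal_mul (inv_pos.mpr hc0).le, inv_mul_cancel₀ hc0.ne',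
        ENNReal.ofReal_one]
  have hgt1 : 1 < ∫⁻ t in Set.Ioo (0:ℝ) 1, v t * g' t := by
    have heq : ∫⁻ t in Set.Ioo (0:ℝ) 1, v t * g' t
        = ENNReal.ofReal c⁻¹ * ∫⁻ t in Set.Ioo (0:ℝ) 1, v t * gE t := by
      rw [← lintegral_const_mul _ (f := fun t => v t * gE t) (hv.mul hgEmeas)]
      apply lintegral_congr
      intro t
      rw [hg'def]
      ring
    rw [heq]
    have hmul : ENNReal.ofReal c⁻¹ * ENNReal.ofReal c
        < ENNReal.ofReal c⁻¹ * ∫⁻ t in Set.Ioo (0:ℝ) 1, v t * gE t := by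
      rw [ENNReal.mul_lt_mul_iff_right (ENNReal.ofReal_pos.mpr (inv_pos.mpr hc0)).ne'
        ENNReal.ofReal_ne_top]
      exact hlx
    have hone : (1:ℝ≥0∞) = ENNReal.ofReal c⁻¹ * ENNReal.ofReal c := by
      rw [← ENNReal.ofReal_mul (inv_pos.mpr hc0).le, inv_mul_cancel₀ hc0.ne',
        ENNReal.ofReal_one]
    exact lt_of_le_of_lt (le_of_eq hone) hmul
  have hfinal : 1 < bidual ρ v :=
    lt_of_lt_of_le hgt1 (le_iSup₂ (f := fun (g : ℝ → ℝ≥0∞)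
      (_ : Measurable g ∧ assoc ρ g ≤ 1) => ∫⁻ t in Set.Ioo (0:ℝ) 1, v t * g t)
      g' ⟨hg'meas, hg'assoc⟩)
  exact absurd hbid (not_lt.mpr hfinal.le)

lemma biduality (hρ : IsRiNorm ρ) (u : ℝ → ℝ≥0∞) (hu : Measurable u) :
    ρ u ≤ bidual ρ u := by
  have hmono : ∀ t, Monotone fun N : ℕ => min (u t) (N : ℝ≥0∞) := by
    intro t N M h
    exact min_le_min le_rfl (by exact_mod_cast h)
  have h5 := hρ.2.2.2.2.1 (fun N t => min (u t) (N:ℝ≥0∞)) u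
    (fun N => hu.min measurable_const) hu
    (Filter.Eventually.of_forall hmono)
    (Filter.Eventually.of_forall fun t => iSup_min_nat (u t))
  rw [← h5]
  apply iSup_le
  intro N
  apply ENNReal.le_of_forall_pos_le_add
  intro ε hε hb
  set r := (bidual ρ u).toReal + (ε:ℝ) with hrdef
  have hεpos : (0:ℝ) < ε := hε
  have hrpos : 0 < r := by
    rw [hrdef]
    positivity
  have hofr : ENNReal.ofReal r = bidual ρ u + (ε:ℝ≥0∞) := by
    rw [hrdef, ENNReal.ofReal_add ENNReal.toReal_nonneg hεpos.le,
      ENNReal.ofReal_toReal hb.ne, ENNReal.ofReal_coe_nnreal]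
  have hblt : bidual ρ u < ENNReal.ofReal r := by
    rw [hofr]
    exact ENNReal.lt_add_right hb.ne (by exact_mod_cast hε.ne')
  set w := fun t => ENNReal.ofReal r⁻¹ * min (u t) (N:ℝ≥0∞) with hwdef
  have hwmeas : Measurable w := (hu.min measurable_const).const_mul _
  have hwbd : ∀ t, w t ≤ ENNReal.ofReal (r⁻¹ * N) := by
    intro t
    calc w t ≤ ENNReal.ofReal r⁻¹ * (N:ℝ≥0∞) := mul_le_mul_right (min_le_right _ _) _
    _ = ENNReal.ofReal (r⁻¹ * N) := by
        rw [ENNReal.ofReal_mul (inv_pos.mpr hrpos).le, ENNReal.ofReal_natCast]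
  have hwbid : bidual ρ w < 1 := by
    have h1 : bidual ρ w ≤ ENNReal.ofReal r⁻¹ * bidual ρ (fun t => min (u t) (N:ℝ≥0∞)) :=
      bidual_smul_le ρ _ (hu.min measurable_const)
    have h2 : bidual ρ (fun t => min (u t) (N:ℝ≥0∞)) ≤ bidual ρ u :=
      bidual_mono ρ fun t => min_le_left _ _
    refine lt_of_le_of_lt (le_trans h1 (mul_le_mul_right h2 _)) ?_
    have hlt : ENNReal.ofReal r⁻¹ * bidual ρ u < ENNReal.ofReal r⁻¹ * ENNReal.ofReal r := by
      rw [ENNReal.mul_lt_mul_iff_right (ENNReal.ofReal_pos.mpr (inv_pos.mpr hrpos)).ne'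
        ENNReal.ofReal_ne_top]
      exact hblt
    refine lt_of_lt_of_le hlt (le_of_eq ?_)
    rw [← ENNReal.ofReal_mul (inv_pos.mpr hrpos).le, inv_mul_cancel₀ hrpos.ne',
      ENNReal.ofReal_one]
  have hcore : ρ w ≤ 1 := ll_core hρ hwmeas hwbd hwbid
  have hrec : (fun t => min (u t) (N:ℝ≥0∞)) = fun t => ENNReal.ofReal r * w t := by
    ext t
    rw [hwdef]
    rw [← mul_assoc, ← ENNReal.ofReal_mul hrpos.le, mul_inv_cancel₀ hrpos.ne',
      ENNReal.ofReal_one, one_mul]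
  have hfin1 : ρ (fun t => min (u t) (N:ℝ≥0∞)) = ENNReal.ofReal r * ρ w := by
    rw [hrec, rho_smul hρ hwmeas hrpos.le]
  calc ρ (fun t => min (u t) (N:ℝ≥0∞))
      = ENNReal.ofReal r * ρ w := hfin1
    _ ≤ ENNReal.ofReal r * 1 := mul_le_mul_right hcore _
    _ = bidual ρ u + (ε:ℝ≥0∞) := by rw [mul_one, hofr]

/-! ### Facts about the quasiconcave function -/

/-- Monotone extension of `I` to `ℝ`. -/
def mext (I : ℝ → ℝ) : ℝ → ℝ := fun s => if s ≤ 0 then 0 else if 1 ≤ s then 1 else I s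

lemma mext_eq (I : ℝ → ℝ) {s : ℝ} (hs : s ∈ Set.Ioo (0:ℝ) 1) : mext I s = I s := by
  rw [mext, if_neg (not_le.mpr hs.1), if_neg (not_le.mpr hs.2)]

lemma mext_mono {I : ℝ → ℝ} (hqc : Quasiconcave I) : Monotone (mext I) := by
  have hIm : ∀ s ∈ Set.Ioo (0:ℝ) 1, I s ∈ Set.Ioo (0:ℝ) 1 := fun s hs => hqc.1.mapsTo hs
  intro a b hab
  rw [mext, mext]
  by_cases ha0 : a ≤ 0
  · rw [if_pos ha0]
    by_cases hb0 : b ≤ 0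
    · rw [if_pos hb0]
    · rw [if_neg hb0]
      by_cases hb1 : 1 ≤ b
      · rw [if_pos hb1]; norm_num
      · rw [if_neg hb1]
        exact (hIm b ⟨not_le.mp hb0, not_le.mp hb1⟩).1.le
  · rw [if_neg ha0]
    have hb0 : ¬ b ≤ 0 := fun h => ha0 (le_trans hab h)
    rw [if_neg hb0]
    by_cases ha1 : 1 ≤ a
    · rw [if_pos ha1, if_pos (le_trans ha1 hab)]
    · rw [if_neg ha1]
      by_cases hb1 : 1 ≤ b
      · rw [if_pos hb1]
        exact (hIm a ⟨not_le.mp ha0, not_le.mp ha1⟩).2.le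
      · rw [if_neg hb1]
        exact hqc.2.1 ⟨not_le.mp ha0, not_le.mp ha1⟩ ⟨not_le.mp hb0, not_le.mp hb1⟩ hab

lemma ratio_antitone {I : ℝ → ℝ} (hqc : Quasiconcave I) {τ s : ℝ} (hτ : 0 < τ) (hτs : τ ≤ s)
    (hs : s < 1) : I s / s ≤ I τ / τ :=
  hqc.2.2.1 ⟨hτ, lt_of_le_of_lt hτs hs⟩ ⟨lt_of_lt_of_le hτ hτs, hs⟩ hτs

lemma int_ratio_ge {I : ℝ → ℝ} (hqc : Quasiconcave I) {s : ℝ} (hs : s ∈ Set.Ioo (0:ℝ) 1) :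
    ENNReal.ofReal (I s) ≤ ∫⁻ τ in Set.Ioo (0:ℝ) s, ENNReal.ofReal (mext I τ / τ) := by
  have hmono := mext_mono hqc
  have hmeas : Measurable fun τ => ENNReal.ofReal (mext I τ / τ) :=
    (hmono.measurable.div measurable_id).ennreal_ofReal
  have h1 : ∫⁻ τ in Set.Ioo (0:ℝ) s, ENNReal.ofReal (I s / s)
      ≤ ∫⁻ τ in Set.Ioo (0:ℝ) s, ENNReal.ofReal (mext I τ / τ) := by
    apply setLIntegral_mono hmeas
    intro τ hτ
    apply ENNReal.ofReal_le_ofReal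
    rw [mext_eq I ⟨hτ.1, lt_trans hτ.2 hs.2⟩]
    exact ratio_antitone hqc hτ.1 hτ.2.le hs.2
  refine le_trans (le_of_eq ?_) h1
  rw [setLIntegral_const, Real.volume_Ioo, sub_zero,
    ← ENNReal.ofReal_mul (div_nonneg (hqc.1.mapsTo hs).1.le hs.1.le),
    div_mul_cancel₀ _ hs.1.ne']

/-! ### Dilation by 2 -/

lemma half_scale (F : ℝ → ℝ≥0∞) (hF : Measurable F) :
    ∫⁻ t in Set.Ioo (0:ℝ) 1, F (t/2) ≤ 2 * ∫⁻ u in Set.Ioo (0:ℝ) 1, F u := by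
  have hmap : Measurable fun t : ℝ => t / 2 := measurable_id.div_const 2
  have h1 : ∫⁻ t in Set.Ioo (0:ℝ) 1, F (t/2)
      = ∫⁻ u, F u ∂(Measure.map (fun t : ℝ => t / 2) (volume.restrict (Set.Ioo (0:ℝ) 1))) :=
    (lintegral_map hF hmap).symm
  have h2 : (fun t : ℝ => t / 2) = fun t : ℝ => (2⁻¹ : ℝ) * t := by
    ext t; ring
  have h3 : Measure.map (fun t : ℝ => t / 2) (volume.restrict (Set.Ioo (0:ℝ) 1))
      = ((2:ℝ≥0∞) • volume).restrict (Set.Ioo (0:ℝ) (1/2)) := by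
    have hpre : (fun t : ℝ => t / 2) ⁻¹' Set.Ioo (0:ℝ) (1/2) = Set.Ioo (0:ℝ) 1 := by
      ext t
      simp only [Set.mem_preimage, Set.mem_Ioo]
      constructor
      · rintro ⟨h1', h2'⟩; constructor <;> linarith
      · rintro ⟨h1', h2'⟩; constructor <;> linarith
    rw [← hpre, ← Measure.restrict_map hmap measurableSet_Ioo]
    congr 1
    rw [h2, Real.map_volume_mul_left (by norm_num : (2⁻¹:ℝ) ≠ 0)]
    norm_num
  rw [h1, h3, Measure.restrict_smul, lintegral_smul_measure]
  apply mul_le_mul_right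
  apply lintegral_mono' (Measure.restrict_mono (Set.Ioo_subset_Ioo_right (by norm_num)) le_rfl)
    le_rfl

/-! ### assoc congruence -/

lemma assoc_congr (ρ : (ℝ → ℝ≥0∞) → ℝ≥0∞) {v₁ v₂ : ℝ → ℝ≥0∞}
    (h : ∀ t ∈ Set.Ioo (0:ℝ) 1, v₁ t = v₂ t) : assoc ρ v₁ = assoc ρ v₂ := by
  unfold assoc
  apply iSup_congr
  intro g
  apply iSup_congr
  intro _
  apply setLIntegral_congr_fun_ae measurableSet_Ioo
  apply Filter.Eventually.of_forall
  intro t ht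
  rw [h t ht]

lemma HI_antitone (I : ℝ → ℝ) (v : ℝ → ℝ≥0∞) : Antitone (HI I v) := by
  intro a b hab
  exact lintegral_mono' (Measure.restrict_mono (Set.Ioo_subset_Ioo_left hab) le_rfl) le_rfl

end S17

end Aux

/-- Theorem 4.14 / `thm:hvezdickadomeny`.  For quasiconcave `I` satisfying
(★) and an r.i. norm `‖·‖_Y` with `H_I 1 ∈ Y` and `T_I` bounded on `Y'`, one has
`‖H_I f‖_Y ≲ ‖H_I f^*‖_Y`, and consequently
`‖f‖_{X_Y} = sup_{h ∼ f} ‖H_I h‖_Y ≈ ‖H_I f^*‖_Y`. -/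
theorem statement17 (I : ℝ → ℝ) (hqc : Quasiconcave I) (hstar : StarCond I)
    (ρ : (ℝ → ℝ≥0∞) → ℝ≥0∞) (hρ : IsRiNorm ρ)
    (hH1 : ρ (HI I (fun _ => 1)) < ⊤)
    (C₀ : ℝ) (hC₀ : 0 < C₀)
    (hT : ∀ g : ℝ → ℝ≥0∞, Measurable g →
      assoc ρ (TI I g) ≤ ENNReal.ofReal C₀ * assoc ρ g) :
    (∃ C : ℝ, 0 < C ∧ ∀ f : ℝ → ℝ≥0∞, Measurable f →
        ρ (HI I f) ≤ ENNReal.ofReal C * ρ (HI I (rearr f))) ∧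
    (∃ c₁ c₂ : ℝ, 0 < c₁ ∧ 0 < c₂ ∧ ∀ f : ℝ → ℝ≥0∞, Measurable f →
        ENNReal.ofReal c₁ * optDomainNorm I ρ f ≤ ρ (HI I (rearr f)) ∧
          ρ (HI I (rearr f)) ≤ ENNReal.ofReal c₂ * optDomainNorm I ρ f) := by
  classical
  have hIm : ∀ s ∈ Set.Ioo (0:ℝ) 1, I s ∈ Set.Ioo (0:ℝ) 1 := fun s hs => hqc.1.mapsTo hs
  obtain ⟨Cs, hCs, hstar'⟩ := hstar
  set m := S17.mext I with hmdef
  have hmmono : Monotone m := S17.mext_mono hqc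
  have hmmeas : Measurable m := hmmono.measurable
  have hmeq : ∀ s ∈ Set.Ioo (0:ℝ) 1, m s = I s := fun s hs => S17.mext_eq I hs
  set Cfin := 2 * (1 + Cs) * C₀ with hCfin
  have hCfin_pos : 0 < Cfin := by positivity
  have part1 : ∀ f : ℝ → ℝ≥0∞, Measurable f →
      ρ (HI I f) ≤ ENNReal.ofReal Cfin * ρ (HI I (rearr f)) := by
    intro f hf
    set φ := rearr f with hφdef
    have hφmeas : Measurable φ := S17.rearr_measurable f
    have hφanti : Antitone φ := S17.rearr_antitone f
    have hHIφmeas : Measurable (HI I φ) := (S17.HI_antitone I φ).measurable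
    have hbid := S17.biduality hρ (HI I f) ((S17.HI_antitone I f).measurable)
    refine le_trans hbid (iSup₂_le fun g hg => ?_)
    obtain ⟨hgmeas, hg1⟩ := hg
    set M := fun t : ℝ => ⨆ s ∈ Set.Ico t 1, ENNReal.ofReal (s / I s) * rearr g s with hMdef
    have hManti : Antitone M := by
      intro a b hab
      apply iSup₂_le
      intro s hs
      exact le_iSup₂ (f := fun (s:ℝ) (_ : s ∈ Set.Ico a 1) =>
        ENNReal.ofReal (s / I s) * rearr g s) s ⟨le_trans hab hs.1, hs.2⟩
    have hMmeas : Measurable M := hManti.measurable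
    set h' := fun τ : ℝ => ENNReal.ofReal (m τ / τ) * M τ with hh'def
    have hh'meas : Measurable h' := ((hmmeas.div measurable_id).ennreal_ofReal).mul hMmeas
    have hh'eq : ∀ τ ∈ Set.Ioo (0:ℝ) 1, h' τ = TI I g τ := by
      intro τ hτ
      show ENNReal.ofReal (m τ / τ) * M τ = _
      rw [hmeq τ hτ]
      rfl
    have hrg_le : ∀ τ ∈ Set.Ioo (0:ℝ) 1, rearr g τ ≤ h' τ := by
      intro τ hτ
      have hIτ := hIm τ hτ
      have h1 : ENNReal.ofReal (τ / I τ) * rearr g τ ≤ M τ :=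
        le_iSup₂ (f := fun (s:ℝ) (_ : s ∈ Set.Ico τ 1) =>
          ENNReal.ofReal (s / I s) * rearr g s) τ ⟨le_rfl, hτ.2⟩
      have h2 : ENNReal.ofReal (m τ / τ) * (ENNReal.ofReal (τ / I τ) * rearr g τ) ≤ h' τ :=
        mul_le_mul_right h1 _
      refine le_trans (le_of_eq ?_) h2
      rw [← mul_assoc, hmeq τ hτ, ← ENNReal.ofReal_mul (div_nonneg hIτ.1.le hτ.1.le)]
      rw [show I τ / τ * (τ / I τ) = 1 by
        rw [div_mul_div_comm, mul_comm τ (I τ)]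
        exact div_self (ne_of_gt (mul_pos hIτ.1 hτ.1))]
      simp
    set Θ := fun s : ℝ => ∫⁻ τ in Set.Ioo (0:ℝ) s, h' τ with hΘdef
    have hΘmono : Monotone Θ := fun a b hab =>
      lintegral_mono' (Measure.restrict_mono (Set.Ioo_subset_Ioo_right hab) le_rfl) le_rfl
    have hΘmeas : Measurable Θ := hΘmono.measurable
    set ψ := fun s : ℝ => Θ s * (ENNReal.ofReal (m s))⁻¹ with hψdef
    have hψmeas : Measurable ψ := hΘmeas.mul (hmmeas.ennreal_ofReal.inv)
    have hψqm : ∀ s σ : ℝ, s ∈ Set.Ioo (0:ℝ) 1 → σ ∈ Set.Ioo (0:ℝ) 1 → s ≤ σ →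
        ψ σ ≤ ENNReal.ofReal (1 + Cs) * ψ s := by
      intro s σ hs hσ hsσ
      have hIs := hIm s hs
      have hIσ := hIm σ hσ
      have hsplit : Θ σ = Θ s + ∫⁻ τ in Set.Ico s σ, h' τ := by
        show ∫⁻ τ in Set.Ioo (0:ℝ) σ, h' τ = _
        rw [← Set.Ioo_union_Ico_eq_Ioo hs.1 hsσ,
          lintegral_union measurableSet_Ico (by
            rw [Set.disjoint_left]
            rintro x hx1 hx2
            exact absurd hx1.2 (not_lt.mpr hx2.1))]
      have htail : ∫⁻ τ in Set.Ico s σ, h' τ ≤ M s * ENNReal.ofReal (Cs * I σ) := by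
        have hfirst : ∫⁻ τ in Set.Ico s σ, h' τ
            ≤ ∫⁻ τ in Set.Ico s σ, ENNReal.ofReal (m τ / τ) * M s := by
          apply setLIntegral_mono' measurableSet_Ico
          intro τ hτ
          exact mul_le_mul_right (hManti hτ.1) _
        calc ∫⁻ τ in Set.Ico s σ, h' τ
            ≤ ∫⁻ τ in Set.Ico s σ, ENNReal.ofReal (m τ / τ) * M s := hfirst
          _ = (∫⁻ τ in Set.Ico s σ, ENNReal.ofReal (m τ / τ)) * M s :=
            lintegral_mul_const _ ((hmmeas.div measurable_id).ennreal_ofReal)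
          _ ≤ (∫⁻ τ in Set.Ioo (0:ℝ) σ, ENNReal.ofReal (m τ / τ)) * M s := by
            apply mul_le_mul_left
            refine lintegral_mono' (Measure.restrict_mono ?_ le_rfl) le_rfl
            intro τ hτ
            exact ⟨lt_of_lt_of_le hs.1 hτ.1, hτ.2⟩
          _ = (∫⁻ τ in Set.Ioo (0:ℝ) σ, ENNReal.ofReal (I τ / τ)) * M s := by
            congr 1
            apply setLIntegral_congr_fun_ae measurableSet_Ioo
            apply Filter.Eventually.of_forall
            intro τ hτ
            rw [hmeq τ ⟨hτ.1, lt_trans hτ.2 hσ.2⟩]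
          _ ≤ ENNReal.ofReal (Cs * I σ) * M s := mul_le_mul_left (hstar' σ hσ) _
          _ = M s * ENNReal.ofReal (Cs * I σ) := mul_comm _ _
      have hMψ : ENNReal.ofReal (I s) * M s ≤ Θ s := by
        calc ENNReal.ofReal (I s) * M s
            ≤ (∫⁻ τ in Set.Ioo (0:ℝ) s, ENNReal.ofReal (m τ / τ)) * M s :=
              mul_le_mul_left (S17.int_ratio_ge hqc hs) _
          _ = ∫⁻ τ in Set.Ioo (0:ℝ) s, ENNReal.ofReal (m τ / τ) * M s :=
            (lintegral_mul_const _ ((hmmeas.div measurable_id).ennreal_ofReal)).symm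
          _ ≤ ∫⁻ τ in Set.Ioo (0:ℝ) s, h' τ := by
            apply setLIntegral_mono' measurableSet_Ioo
            intro τ hτ
            exact mul_le_mul_right (hManti hτ.2.le) _
      have hofIs : ENNReal.ofReal (I s) ≠ 0 := (ENNReal.ofReal_pos.mpr hIs.1).ne'
      have hofIσ : ENNReal.ofReal (I σ) ≠ 0 := (ENNReal.ofReal_pos.mpr hIσ.1).ne'
      have hMs : M s ≤ ψ s := by
        have h1 : M s = ENNReal.ofReal (I s) * M s * (ENNReal.ofReal (m s))⁻¹ := by
          rw [hmeq s hs, mul_comm (ENNReal.ofReal (I s)) (M s), mul_assoc,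
            ENNReal.mul_inv_cancel hofIs ENNReal.ofReal_ne_top, mul_one]
        rw [h1]
        exact mul_le_mul_left hMψ _
      have hinvle : (ENNReal.ofReal (m σ))⁻¹ ≤ (ENNReal.ofReal (m s))⁻¹ :=
        ENNReal.inv_le_inv.mpr (ENNReal.ofReal_le_ofReal (hmmono hsσ))
      have hp1 : Θ s * (ENNReal.ofReal (m σ))⁻¹ ≤ ψ s := mul_le_mul_right hinvle _
      have hp2 : M s * ENNReal.ofReal (Cs * I σ) * (ENNReal.ofReal (m σ))⁻¹
          ≤ ENNReal.ofReal Cs * ψ s := by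
        have h2 : M s * ENNReal.ofReal (Cs * I σ) * (ENNReal.ofReal (m σ))⁻¹
            = ENNReal.ofReal Cs * M s := by
          rw [hmeq σ hσ, ENNReal.ofReal_mul hCs.le,
            show M s * (ENNReal.ofReal Cs * ENNReal.ofReal (I σ)) * (ENNReal.ofReal (I σ))⁻¹
              = ENNReal.ofReal Cs * (M s * (ENNReal.ofReal (I σ) * (ENNReal.ofReal (I σ))⁻¹))
              from by ring,
            ENNReal.mul_inv_cancel hofIσ ENNReal.ofReal_ne_top, mul_one]
        rw [h2]
        exact mul_le_mul_right hMs _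
      calc ψ σ = Θ σ * (ENNReal.ofReal (m σ))⁻¹ := rfl
        _ ≤ (Θ s + M s * ENNReal.ofReal (Cs * I σ)) * (ENNReal.ofReal (m σ))⁻¹ := by
          apply mul_le_mul_left
          rw [hsplit]
          exact add_le_add_right htail _
        _ = Θ s * (ENNReal.ofReal (m σ))⁻¹
            + M s * ENNReal.ofReal (Cs * I σ) * (ENNReal.ofReal (m σ))⁻¹ := add_mul _ _ _
        _ ≤ ψ s + ENNReal.ofReal Cs * ψ s := add_le_add hp1 hp2
        _ = ENNReal.ofReal (1 + Cs) * ψ s := by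
          rw [ENNReal.ofReal_add one_pos.le hCs.le, ENNReal.ofReal_one, add_mul, one_mul]
    set V := fun s : ℝ => ⨆ σ ∈ Set.Ico s 1, ψ σ with hVdef
    have hVanti : Antitone V := by
      intro a b hab
      apply iSup₂_le
      intro σ hσ
      exact le_iSup₂ (f := fun (σ:ℝ) (_ : σ ∈ Set.Ico a 1) => ψ σ) σ ⟨le_trans hab hσ.1, hσ.2⟩
    have hVmeas : Measurable V := hVanti.measurable
    have hVle : ∀ s ∈ Set.Ioo (0:ℝ) 1, V s ≤ ENNReal.ofReal (1 + Cs) * ψ s := by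
      intro s hs
      apply iSup₂_le
      intro σ hσ
      exact hψqm s σ hs ⟨lt_of_lt_of_le hs.1 hσ.1, hσ.2⟩ hσ.1
    set G := fun s : ℝ => ∫⁻ τ in Set.Ioo (0:ℝ) s, g τ with hGdef
    have hGmono : Monotone G := fun a b hab =>
      lintegral_mono' (Measure.restrict_mono (Set.Ioo_subset_Ioo_right hab) le_rfl) le_rfl
    have hGmeas : Measurable G := hGmono.measurable
    set w := fun s : ℝ => G s * (ENNReal.ofReal (m s))⁻¹ with hwdef
    have hwmeas : Measurable w := hGmeas.mul (hmmeas.ennreal_ofReal.inv)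
    have hstepB : ∫⁻ t in Set.Ioo (0:ℝ) 1, HI I f t * g t
        = ∫⁻ s in Set.Ioo (0:ℝ) 1, f s * w s := by
      set F := fun s : ℝ => f s * (ENNReal.ofReal (m s))⁻¹ with hFdef
      have hFmeas : Measurable F := hf.mul (hmmeas.ennreal_ofReal.inv)
      have h1 : ∫⁻ t in Set.Ioo (0:ℝ) 1, HI I f t * g t
          = ∫⁻ t in Set.Ioo (0:ℝ) 1, (∫⁻ s in Set.Ioo t 1, F s) * g t := by
        apply setLIntegral_congr_fun_ae measurableSet_Ioo
        apply Filter.Eventually.of_forall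
        intro t ht
        congr 1
        apply setLIntegral_congr_fun_ae measurableSet_Ioo
        apply Filter.Eventually.of_forall
        intro s hs
        show f s / ENNReal.ofReal (I s) = F s
        rw [div_eq_mul_inv]
        show f s * (ENNReal.ofReal (I s))⁻¹ = f s * (ENNReal.ofReal (m s))⁻¹
        rw [hmeq s ⟨lt_trans ht.1 hs.1, hs.2⟩]
      rw [h1, S17.fubini_kernel F g hFmeas hgmeas]
      apply setLIntegral_congr_fun_ae measurableSet_Ioo
      apply Filter.Eventually.of_forall
      intro s hs
      show F s * G s = f s * w s
      show f s * (ENNReal.ofReal (m s))⁻¹ * G s = f s * (G s * (ENNReal.ofReal (m s))⁻¹)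
      ring
    have hGΘ : ∀ s ∈ Set.Ioo (0:ℝ) 1, G s ≤ Θ s := by
      intro s hs
      set χ := Set.indicator (Set.Ioo (0:ℝ) s) (fun _ => (1:ℝ≥0∞)) with hχdef
      have hχmeas : Measurable χ := measurable_const.indicator measurableSet_Ioo
      have hχle : ∀ τ, χ τ ≤ 1 := by
        intro τ
        by_cases hτ : τ ∈ Set.Ioo (0:ℝ) s <;> simp [hχdef, Set.indicator_apply, hτ]
      have hgχ : ∀ τ, g τ * χ τ = Set.indicator (Set.Ioo (0:ℝ) s) g τ := by
        intro τ
        by_cases hτ : τ ∈ Set.Ioo (0:ℝ) s <;>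
          simp [hχdef, Set.indicator_apply, hτ]
      have h1 : G s = ∫⁻ τ in Set.Ioo (0:ℝ) 1, g τ * χ τ := by
        simp_rw [hgχ]
        rw [lintegral_indicator measurableSet_Ioo, Measure.restrict_restrict measurableSet_Ioo,
          Set.inter_eq_left.mpr (Set.Ioo_subset_Ioo_right hs.2.le)]
      have h2 := S17.hardy_littlewood g χ hgmeas hχmeas
      have hχ1 : ∀ τ, rearr χ τ ≤ 1 := by
        intro τ
        apply S17.rearr_le
        have hz : S17.distrib χ 1 = 0 := by
          have hempty : {τ' ∈ Set.Ioo (0:ℝ) 1 | (1:ℝ≥0∞) < χ τ'} = ∅ := by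
            ext τ'
            simp only [Set.mem_setOf_eq, Set.mem_empty_iff_false, iff_false, not_and]
            intro _
            exact not_lt.mpr (hχle τ')
          rw [S17.distrib, hempty]
          simp
        rw [hz]
        exact zero_le
      have hχ0 : ∀ τ, s ≤ τ → rearr χ τ = 0 := by
        intro τ hτ
        apply le_antisymm _ (zero_le)
        apply S17.rearr_le
        have hsub : {τ' ∈ Set.Ioo (0:ℝ) 1 | (0:ℝ≥0∞) < χ τ'} ⊆ Set.Ioo (0:ℝ) s := by
          rintro τ' ⟨hτ', hpos⟩
          by_contra hc
          have : χ τ' = 0 := Set.indicator_of_notMem hc _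
          rw [this] at hpos
          exact lt_irrefl _ hpos
        calc S17.distrib χ 0 ≤ volume (Set.Ioo (0:ℝ) s) := measure_mono hsub
          _ = ENNReal.ofReal s := by rw [Real.volume_Ioo, sub_zero]
          _ ≤ ENNReal.ofReal τ := ENNReal.ofReal_le_ofReal hτ
      have h3 : ∫⁻ τ in Set.Ioo (0:ℝ) 1, rearr g τ * rearr χ τ
          ≤ ∫⁻ τ in Set.Ioo (0:ℝ) s, h' τ := by
        have hfirst : ∫⁻ τ in Set.Ioo (0:ℝ) 1, rearr g τ * rearr χ τ
            ≤ ∫⁻ τ in Set.Ioo (0:ℝ) 1, Set.indicator (Set.Ioo (0:ℝ) s) (fun τ => rearr g τ) τ := by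
          apply setLIntegral_mono' measurableSet_Ioo
          intro τ hτ
          by_cases hτs : τ ∈ Set.Ioo (0:ℝ) s
          · rw [Set.indicator_of_mem hτs]
            calc rearr g τ * rearr χ τ ≤ rearr g τ * 1 := mul_le_mul_right (hχ1 τ) _
              _ = rearr g τ := mul_one _
          · rw [Set.indicator_of_notMem hτs]
            have hsτ : s ≤ τ := by
              by_contra hc
              push_neg at hc
              exact hτs ⟨hτ.1, hc⟩
            rw [hχ0 τ hsτ, mul_zero]
        calc ∫⁻ τ in Set.Ioo (0:ℝ) 1, rearr g τ * rearr χ τ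
            ≤ ∫⁻ τ in Set.Ioo (0:ℝ) 1, Set.indicator (Set.Ioo (0:ℝ) s) (fun τ => rearr g τ) τ :=
              hfirst
          _ = ∫⁻ τ in Set.Ioo (0:ℝ) s, rearr g τ := by
            rw [lintegral_indicator measurableSet_Ioo,
              Measure.restrict_restrict measurableSet_Ioo,
              Set.inter_eq_left.mpr (Set.Ioo_subset_Ioo_right hs.2.le)]
          _ ≤ ∫⁻ τ in Set.Ioo (0:ℝ) s, h' τ := by
            apply setLIntegral_mono' measurableSet_Ioo
            intro τ hτ
            exact hrg_le τ ⟨hτ.1, lt_trans hτ.2 hs.2⟩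
      calc G s = ∫⁻ τ in Set.Ioo (0:ℝ) 1, g τ * χ τ := h1
        _ ≤ ∫⁻ τ in Set.Ioo (0:ℝ) 1, rearr g τ * rearr χ τ := h2
        _ ≤ ∫⁻ τ in Set.Ioo (0:ℝ) s, h' τ := h3
    have hwV : ∀ s ∈ Set.Ioo (0:ℝ) 1, w s ≤ V s := by
      intro s hs
      have h1 : w s ≤ ψ s := mul_le_mul_left (hGΘ s hs) _
      exact le_trans h1 (le_iSup₂ (f := fun (σ:ℝ) (_ : σ ∈ Set.Ico s 1) => ψ σ) s ⟨le_rfl, hs.2⟩)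
    have hrwV : ∀ t : ℝ, rearr w t ≤ rearr V t := S17.rearr_mono hwV
    have hrVhalf : ∀ t ∈ Set.Ioo (0:ℝ) 1, rearr V t ≤ V (t/2) := by
      intro t ht
      apply S17.rearr_le
      have hsub : {τ ∈ Set.Ioo (0:ℝ) 1 | V (t/2) < V τ} ⊆ Set.Ioc 0 (t/2) := by
        rintro τ ⟨hτ, hlt⟩
        refine ⟨hτ.1, ?_⟩
        by_contra hcon
        push_neg at hcon
        exact absurd (hVanti hcon.le) (not_le.mpr hlt)
      calc S17.distrib V (V (t/2)) ≤ volume (Set.Ioc (0:ℝ) (t/2)) := measure_mono hsub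
        _ = ENNReal.ofReal (t/2) := by rw [Real.volume_Ioc, sub_zero]
        _ ≤ ENNReal.ofReal t := ENNReal.ofReal_le_ofReal (by linarith [ht.1])
    have hstepF : ∫⁻ u in Set.Ioo (0:ℝ) 1, φ u * ψ u
        = ∫⁻ τ in Set.Ioo (0:ℝ) 1, h' τ * HI I φ τ := by
      set F' := fun s : ℝ => φ s * (ENNReal.ofReal (m s))⁻¹ with hF'def
      have hF'meas : Measurable F' := hφmeas.mul (hmmeas.ennreal_ofReal.inv)
      have h1 := S17.fubini_kernel F' h' hF'meas hh'meas
      have h2 : ∫⁻ u in Set.Ioo (0:ℝ) 1, φ u * ψ u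
          = ∫⁻ s in Set.Ioo (0:ℝ) 1, F' s * ∫⁻ τ in Set.Ioo 0 s, h' τ := by
        apply setLIntegral_congr_fun_ae measurableSet_Ioo
        apply Filter.Eventually.of_forall
        intro s hs
        show φ s * (Θ s * (ENNReal.ofReal (m s))⁻¹)
          = φ s * (ENNReal.ofReal (m s))⁻¹ * Θ s
        ring
      have h3 : ∫⁻ t in Set.Ioo (0:ℝ) 1, (∫⁻ s in Set.Ioo t 1, F' s) * h' t
          = ∫⁻ τ in Set.Ioo (0:ℝ) 1, h' τ * HI I φ τ := by
        apply setLIntegral_congr_fun_ae measurableSet_Ioo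
        apply Filter.Eventually.of_forall
        intro t ht
        rw [mul_comm]
        congr 1
        apply setLIntegral_congr_fun_ae measurableSet_Ioo
        apply Filter.Eventually.of_forall
        intro s hs
        show φ s * (ENNReal.ofReal (m s))⁻¹ = φ s / ENNReal.ofReal (I s)
        rw [div_eq_mul_inv, hmeq s ⟨lt_trans ht.1 hs.1, hs.2⟩]
      rw [h2, ← h1, h3]
    have hHoelder : ∫⁻ τ in Set.Ioo (0:ℝ) 1, h' τ * HI I φ τ
        ≤ ρ (HI I φ) * ENNReal.ofReal C₀ := by
      have h1 : ∫⁻ τ in Set.Ioo (0:ℝ) 1, h' τ * HI I φ τ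
          = ∫⁻ τ in Set.Ioo (0:ℝ) 1, HI I φ τ * h' τ := by
        apply lintegral_congr
        intro τ
        ring
      rw [h1]
      refine le_trans (S17.hoelder hρ hHIφmeas hh'meas) ?_
      apply mul_le_mul_right
      rw [S17.assoc_congr ρ hh'eq]
      refine le_trans (hT g hgmeas) ?_
      calc ENNReal.ofReal C₀ * assoc ρ g ≤ ENNReal.ofReal C₀ * 1 := mul_le_mul_right hg1 _
        _ = ENNReal.ofReal C₀ := mul_one _
    calc ∫⁻ t in Set.Ioo (0:ℝ) 1, HI I f t * g t
        = ∫⁻ s in Set.Ioo (0:ℝ) 1, f s * w s := hstepB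
      _ ≤ ∫⁻ s in Set.Ioo (0:ℝ) 1, rearr f s * rearr w s :=
        S17.hardy_littlewood f w hf hwmeas
      _ ≤ ∫⁻ s in Set.Ioo (0:ℝ) 1, φ s * rearr V s :=
        lintegral_mono fun s => mul_le_mul_right (hrwV s) _
      _ ≤ ∫⁻ t in Set.Ioo (0:ℝ) 1, φ t * V (t/2) := by
        apply setLIntegral_mono' measurableSet_Ioo
        intro t ht
        exact mul_le_mul_right (hrVhalf t ht) _
      _ ≤ ∫⁻ t in Set.Ioo (0:ℝ) 1, φ (t/2) * V (t/2) := by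
        apply setLIntegral_mono' measurableSet_Ioo
        intro t ht
        exact mul_le_mul_left (hφanti (by linarith [ht.1] : t/2 ≤ t)) _
      _ ≤ 2 * ∫⁻ u in Set.Ioo (0:ℝ) 1, φ u * V u :=
        S17.half_scale (fun u => φ u * V u) (hφmeas.mul hVmeas)
      _ ≤ 2 * ∫⁻ u in Set.Ioo (0:ℝ) 1, φ u * (ENNReal.ofReal (1 + Cs) * ψ u) := by
        apply mul_le_mul_right
        apply setLIntegral_mono' measurableSet_Ioo
        intro u hu
        exact mul_le_mul_right (hVle u hu) _
      _ = 2 * ENNReal.ofReal (1 + Cs) * ∫⁻ u in Set.Ioo (0:ℝ) 1, φ u * ψ u := by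
        rw [mul_assoc]
        congr 1
        rw [← lintegral_const_mul _ (f := fun u => φ u * ψ u) (hφmeas.mul hψmeas)]
        apply lintegral_congr
        intro u
        ring
      _ = 2 * ENNReal.ofReal (1 + Cs) * ∫⁻ τ in Set.Ioo (0:ℝ) 1, h' τ * HI I φ τ := by
        rw [hstepF]
      _ ≤ 2 * ENNReal.ofReal (1 + Cs) * (ρ (HI I φ) * ENNReal.ofReal C₀) :=
        mul_le_mul_right hHoelder _
      _ = ENNReal.ofReal Cfin * ρ (HI I φ) := by
        rw [hCfin, ENNReal.ofReal_mul (by positivity), ENNReal.ofReal_mul (by norm_num : (0:ℝ) ≤ 2)]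
        rw [show ENNReal.ofReal (2:ℝ) = (2:ℝ≥0∞) by
          rw [show (2:ℝ) = ((2:ℕ):ℝ) by norm_num, ENNReal.ofReal_natCast]
          norm_num]
        ring
  constructor
  · exact ⟨Cfin, hCfin_pos, part1⟩
  · refine ⟨Cfin⁻¹, 1, inv_pos.mpr hCfin_pos, one_pos, fun f hf => ?_⟩
    have hup : ρ (HI I (rearr f)) ≤ optDomainNorm I ρ f :=
      le_iSup₂ (f := fun (h : ℝ → ℝ≥0∞)
        (_ : Measurable h ∧ ∀ t ∈ Set.Ioo (0:ℝ) 1, rearr h t = rearr f t) => ρ (HI I h))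
        (rearr f) ⟨S17.rearr_measurable f, fun t ht => S17.rearr_idem f ht⟩
    have hlow : optDomainNorm I ρ f ≤ ENNReal.ofReal Cfin * ρ (HI I (rearr f)) := by
      refine iSup₂_le fun h hh => ?_
      obtain ⟨hhmeas, hhre⟩ := hh
      refine le_trans (part1 h hhmeas) (mul_le_mul_right (le_of_eq ?_) _)
      apply S17.rho_congr hρ ((S17.HI_antitone I (rearr h)).measurable)
        ((S17.HI_antitone I (rearr f)).measurable)
      filter_upwards [ae_restrict_mem measurableSet_Ioo] with t ht
      apply setLIntegral_congr_fun_ae measurableSet_Ioo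
      apply Filter.Eventually.of_forall
      intro s hs
      rw [hhre s ⟨lt_trans ht.1 hs.1, hs.2⟩]
    constructor
    · calc ENNReal.ofReal Cfin⁻¹ * optDomainNorm I ρ f
          ≤ ENNReal.ofReal Cfin⁻¹ * (ENNReal.ofReal Cfin * ρ (HI I (rearr f))) :=
          mul_le_mul_right hlow _
        _ = ρ (HI I (rearr f)) := by
          rw [← mul_assoc, ← ENNReal.ofReal_mul (inv_pos.mpr hCfin_pos).le,
            inv_mul_cancel₀ hCfin_pos.ne', ENNReal.ofReal_one, one_mul]
    · rw [ENNReal.ofReal_one, one_mul]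
      exact hup
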